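/- arXiv:2008.02464 — 6 statements merged into one kernel-verified Lean document; each statement's English description precedes it below -/
import Mathlib

section
/- Let P be a regular Markov chain on state space [n] with stationary distribution π, let T ≥ 1, and let S, Q, σ be the induced state space, Markov chain, and stationary distribution as above. Let φ be a probability vector on [n] and define ρ on S by ρ_{(u_0,…,u_T)} = φ_{u_0}·P_{u_0,u_1}·⋯·P_{u_{T−1},u_T}. Then: (1) for every L > T and every trajectory (v_1,…,v_L) ∈ [n]^L with ∏_{i=1}^{L−1} P_{v_i,v_{i+1}} > 0, setting X_i := (v_i,v_{i+1},…,v_{i+T}) ∈ S for 1 ≤ i ≤ L−T, one has φ_{v_1}·∏_{i=1}^{L−1} P_{v_i,v_{i+1}} = ρ_{X_1}·∏_{i=1}^{L−T−1} Q_{X_i,X_{i+1}}; and (2) ‖ρ‖_σ = ‖φ‖_π, where ‖ρ‖_σ² = Σ_{s∈S} ρ_s²/σ_s and ‖φ‖_π² = Σ_{u∈[n]} φ_u²/π_u. -/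
open scoped BigOperators Kronecker ComplexOrder
open Matrix

/-- A (row-stochastic) Markov chain on a finite state space: nonnegative entries, rows sum to 1. -/
def IsMarkov {S : Type*} [Fintype S] (P : Matrix S S ℝ) : Prop :=
  (∀ i j, 0 ≤ P i j) ∧ ∀ i, ∑ j, P i j = 1

/-- A Markov chain is regular if some positive power has all entries strictly positive. -/
def IsRegularMC {S : Type*} [Fintype S] [DecidableEq S] (P : Matrix S S ℝ) : Prop :=
  ∃ k : ℕ, 0 < k ∧ ∀ i j, 0 < (P ^ k) i j

/-- `π` is a stationary distribution of `P`: strictly positive entries, sums to 1, `πᵀ P = πᵀ`. -/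
def IsStationaryMC {S : Type*} [Fintype S] (P : Matrix S S ℝ) (π : S → ℝ) : Prop :=
  (∀ i, 0 < π i) ∧ (∑ i, π i = 1) ∧ ∀ j, ∑ i, π i * P i j = π j

/-- A probability vector. -/
def IsProbVec {S : Type*} [Fintype S] (φ : S → ℝ) : Prop :=
  (∀ i, 0 ≤ φ i) ∧ ∑ i, φ i = 1

/-- The `π`-norm of a real vector `φ`: `‖φ‖_π = sqrt (∑ i, φ i ^ 2 / π i)`. -/
noncomputable def piNormR {S : Type*} [Fintype S] (π φ : S → ℝ) : ℝ :=
  Real.sqrt (∑ i, φ i ^ 2 / π i)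

/-- The `π`-inner product `⟨x, y⟩_π = y* Π⁻¹ x` on `ℂ^S`. -/
noncomputable def piInner {S : Type*} [Fintype S] (π : S → ℝ) (x y : S → ℂ) : ℂ :=
  ∑ i, (starRingEnd ℂ) (y i) * x i / (π i : ℂ)

/-- The `π`-norm of a complex vector. -/
noncomputable def piNorm {S : Type*} [Fintype S] (π : S → ℝ) (x : S → ℂ) : ℝ :=
  Real.sqrt (∑ i, ‖x i‖ ^ 2 / π i)

/-- The spectral expansion `λ(P)`: the supremum of `‖Pᵀ x‖_π / ‖x‖_π` over nonzero `x`
with `⟨x, π⟩_π = 0`. -/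
noncomputable def specExp {S : Type*} [Fintype S] (P : Matrix S S ℝ) (π : S → ℝ) : ℝ :=
  sSup {r : ℝ | ∃ x : S → ℂ, x ≠ 0 ∧ piInner π x (fun i => (π i : ℂ)) = 0 ∧
    r = piNorm π ((P.map Complex.ofReal)ᵀ *ᵥ x) / piNorm π x}

/-- The spectral (operator 2-)norm of a matrix. -/
noncomputable def spectralNormR {𝕜 : Type*} [RCLike 𝕜] {m n : Type*} [Fintype m] [Fintype n]
    (A : Matrix m n 𝕜) : ℝ :=
  sSup {r : ℝ | ∃ x : n → 𝕜, x ≠ 0 ∧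
    r = Real.sqrt (∑ i, ‖(A *ᵥ x) i‖ ^ 2) / Real.sqrt (∑ j, ‖x j‖ ^ 2)}

/-- The probability that a `k`-step random walk on `P` started from `φ` follows the
trajectory `v`, i.e. `φ (v 1) * ∏ j, P (v j) (v (j+1))`. -/
noncomputable def walkWeight {S : Type*} [Fintype S] (P : Matrix S S ℝ) (φ : S → ℝ)
    {k : ℕ} (v : Fin k → S) : ℝ :=
  if h : 0 < k then
    φ (v ⟨0, h⟩) * ∏ j : Fin (k - 1),
      P (v ⟨(j : ℕ), by have := j.isLt; omega⟩) (v ⟨(j : ℕ) + 1, by have := j.isLt; omega⟩)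
  else 0

/-- The probability of an event `E` under a `k`-step random walk on `P` started from `φ`. -/
noncomputable def walkProb {S : Type*} [Fintype S] (P : Matrix S S ℝ) (φ : S → ℝ)
    {k : ℕ} (E : Set (Fin k → S)) : ℝ :=
  ∑ v : Fin k → S, E.indicator (fun u => walkWeight P φ u) v

/-- The state space `S` of the induced chain: all `(T+1)`-windows `(u_0, …, u_T)` on `[n]`
whose transitions all have positive probability under `P`. -/
def windowSpace {n : ℕ} (P : Matrix (Fin n) (Fin n) ℝ) (T : ℕ) : Type :=
  {u : Fin (T + 1) → Fin n // 0 < ∏ i : Fin T, P (u i.castSucc) (u i.succ)}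

instance {n : ℕ} (P : Matrix (Fin n) (Fin n) ℝ) (T : ℕ) : Finite (windowSpace P T) :=
  inferInstanceAs (Finite {u : Fin (T + 1) → Fin n //
    0 < ∏ i : Fin T, P (u i.castSucc) (u i.succ)})

noncomputable instance {n : ℕ} (P : Matrix (Fin n) (Fin n) ℝ) (T : ℕ) :
    Fintype (windowSpace P T) := Fintype.ofFinite _

noncomputable instance {n : ℕ} (P : Matrix (Fin n) (Fin n) ℝ) (T : ℕ) :
    DecidableEq (windowSpace P T) := Classical.decEq _

/-- The induced Markov chain `Q` on windows:
`Q_{(u_0,…,u_T),(w_0,…,w_T)} = P_{u_T, w_T}` if `(u_1,…,u_T) = (w_0,…,w_{T-1})`, else `0`. -/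
noncomputable def inducedQ {n : ℕ} (P : Matrix (Fin n) (Fin n) ℝ) (T : ℕ) :
    Matrix (windowSpace P T) (windowSpace P T) ℝ :=
  Matrix.of fun u w =>
    if ∀ i : Fin T, u.1 i.succ = w.1 i.castSucc then
      P (u.1 (Fin.last T)) (w.1 (Fin.last T))
    else 0

/-- The induced stationary distribution:
`σ_{(u_0,…,u_T)} = π_{u_0} P_{u_0,u_1} ⋯ P_{u_{T-1},u_T}`. -/
noncomputable def inducedSigma {n : ℕ} (P : Matrix (Fin n) (Fin n) ℝ) (π : Fin n → ℝ)
    (T : ℕ) : windowSpace P T → ℝ :=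
  fun u => π (u.1 0) * ∏ i : Fin T, P (u.1 i.castSucc) (u.1 i.succ)

/-- The induced initial distribution `ρ` on windows:
`ρ_{(u_0,…,u_T)} = φ_{u_0} P_{u_0,u_1} ⋯ P_{u_{T-1},u_T}`. -/
noncomputable def inducedRho {n : ℕ} (P : Matrix (Fin n) (Fin n) ℝ) (φ : Fin n → ℝ)
    (T : ℕ) : windowSpace P T → ℝ :=
  fun u => φ (u.1 0) * ∏ i : Fin T, P (u.1 i.castSucc) (u.1 i.succ)


open Finset in
private lemma pathSum_aux {n : ℕ} {P : Matrix (Fin n) (Fin n) ℝ} (hrow : ∀ i, ∑ j, P i j = 1) :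
    ∀ (T : ℕ) (g : Fin n → ℝ),
      ∑ u : Fin (T+1) → Fin n, g (u 0) * ∏ i : Fin T, P (u i.castSucc) (u i.succ) = ∑ a, g a := by
  intro T
  induction T with
  | zero =>
      intro g
      rw [← Equiv.sum_comp (Equiv.funUnique (Fin 1) (Fin n)).symm
        (fun u => g (u 0) * ∏ i : Fin 0, P (u i.castSucc) (u i.succ))]
      simp
  | succ T ih =>
      intro g
      rw [← Equiv.sum_comp (Fin.consEquiv (fun _ : Fin (T+2) => Fin n))
        (fun u => g (u 0) * ∏ i : Fin (T+1), P (u i.castSucc) (u i.succ)),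
        Fintype.sum_prod_type]
      have key : ∀ (a : Fin n) (v : Fin (T+1) → Fin n),
          g ((Fin.consEquiv (fun _ : Fin (T+2) => Fin n)) (a, v) 0) *
            ∏ i : Fin (T+1), P ((Fin.consEquiv (fun _ : Fin (T+2) => Fin n)) (a, v) i.castSucc)
              ((Fin.consEquiv (fun _ : Fin (T+2) => Fin n)) (a, v) i.succ) =
          (fun b => g a * P a b) (v 0) * ∏ i : Fin T, P (v i.castSucc) (v i.succ) := by
        intro a v
        simp only [Fin.consEquiv_apply]
        rw [Fin.prod_univ_succ]
        have h1 : ∀ i : Fin T, Fin.cons (α := fun _ : Fin (T+2) => Fin n) a v i.succ.castSucc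
            = v i.castSucc := by
          intro i
          rw [← Fin.succ_castSucc, Fin.cons_succ]
        have h2 : ∀ i : Fin T, Fin.cons (α := fun _ : Fin (T+2) => Fin n) a v i.succ.succ
            = v i.succ := by
          intro i; rw [Fin.cons_succ]
        simp only [Fin.castSucc_zero, Fin.cons_zero, Fin.cons_succ, h1, h2]
        ring
      rw [Finset.sum_congr rfl (fun a _ => Finset.sum_congr rfl (fun v _ => key a v))]
      have : ∀ a : Fin n,
          ∑ v : Fin (T+1) → Fin n,
              (fun b => g a * P a b) (v 0) * ∏ i : Fin T, P (v i.castSucc) (v i.succ)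
            = ∑ b, g a * P a b := fun a => ih (fun b => g a * P a b)
      rw [Finset.sum_congr rfl (fun a _ => this a)]
      apply Finset.sum_congr rfl
      intro a _
      rw [← Finset.mul_sum, hrow, mul_one]

set_option maxHeartbeats 1600000

theorem stmt_5 {n T : ℕ} (hT : 1 ≤ T)
    (P : Matrix (Fin n) (Fin n) ℝ) (π φ : Fin n → ℝ)
    (hP : IsMarkov P) (hreg : IsRegularMC P) (hπ : IsStationaryMC P π) (hφ : IsProbVec φ) :
    (∀ (L : ℕ) (hL : T < L) (v : Fin L → Fin n),
      0 < (∏ i : Fin (L - 1),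
          P (v ⟨(i : ℕ), by have := i.isLt; omega⟩)
            (v ⟨(i : ℕ) + 1, by have := i.isLt; omega⟩)) →
      ∀ X : Fin (L - T) → windowSpace P T,
        (∀ (i : Fin (L - T)) (j : Fin (T + 1)),
          (X i).1 j = v ⟨(i : ℕ) + (j : ℕ), by have := i.isLt; have := j.isLt; omega⟩) →
        φ (v ⟨0, by omega⟩) * (∏ i : Fin (L - 1),
            P (v ⟨(i : ℕ), by have := i.isLt; omega⟩)
              (v ⟨(i : ℕ) + 1, by have := i.isLt; omega⟩)) =
          inducedRho P φ T (X ⟨0, by omega⟩) *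
            ∏ i : Fin (L - T - 1),
              inducedQ P T (X ⟨(i : ℕ), by have := i.isLt; omega⟩)
                (X ⟨(i : ℕ) + 1, by have := i.isLt; omega⟩)) ∧
    piNormR (inducedSigma P π T) (inducedRho P φ T) = piNormR π φ := by
  classical
  obtain ⟨hPnn, hrow⟩ := hP
  obtain ⟨hπpos, hπsum, hπstat⟩ := hπ
  constructor
  · intro L hL v hpos X hX
    set f : ℕ → ℝ := fun k => if h : k + 1 < L then P (v ⟨k, by omega⟩) (v ⟨k + 1, h⟩) else 1
      with hf
    have hA : (∏ i : Fin (L - 1),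
        P (v ⟨(i : ℕ), by have := i.isLt; omega⟩)
          (v ⟨(i : ℕ) + 1, by have := i.isLt; omega⟩)) = ∏ k ∈ Finset.range (L - 1), f k := by
      rw [← Fin.prod_univ_eq_prod_range f (L - 1)]
      refine Finset.prod_congr rfl fun i _ => ?_
      have hi : (i : ℕ) + 1 < L := by have := i.isLt; omega
      simp only [hf]
      rw [dif_pos hi]
    have hB : inducedRho P φ T (X ⟨0, by omega⟩)
        = φ (v ⟨0, by omega⟩) * ∏ k ∈ Finset.range T, f k := by
      have h0 : ∀ j : Fin (T+1), (X ⟨0, by omega⟩).1 j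
          = v ⟨(j : ℕ), by have := j.isLt; omega⟩ := by
        intro j
        rw [hX ⟨0, by omega⟩ j]
        congr 1
        apply Fin.ext
        simp
      unfold inducedRho
      rw [h0 0]
      congr 1
      rw [← Fin.prod_univ_eq_prod_range f T]
      refine Finset.prod_congr rfl fun j _ => ?_
      rw [h0 j.castSucc, h0 j.succ]
      simp only [hf]
      rw [dif_pos (show (j : ℕ) + 1 < L by have := j.isLt; omega)]
      congr 1
    have hC : (∏ i : Fin (L - T - 1),
        inducedQ P T (X ⟨(i : ℕ), by have := i.isLt; omega⟩)
          (X ⟨(i : ℕ) + 1, by have := i.isLt; omega⟩))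
        = ∏ k ∈ Finset.range (L - T - 1), f (T + k) := by
      rw [← Fin.prod_univ_eq_prod_range (fun k => f (T + k)) (L - T - 1)]
      refine Finset.prod_congr rfl fun i _ => ?_
      have hi : (i : ℕ) < L - T - 1 := i.isLt
      have hcond : ∀ j : Fin T,
          (X ⟨(i : ℕ), by have := i.isLt; omega⟩).1 j.succ
            = (X ⟨(i : ℕ) + 1, by have := i.isLt; omega⟩).1 j.castSucc := by
        intro j
        rw [hX _ j.succ, hX _ j.castSucc]
        congr 1
        apply Fin.ext
        simp only [Fin.val_succ, Fin.coe_castSucc]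
        omega
      show (inducedQ P T _ _ : ℝ) = _
      rw [inducedQ]
      simp only [Matrix.of_apply]
      rw [if_pos hcond]
      rw [hX _ (Fin.last T), hX _ (Fin.last T)]
      simp only [hf]
      rw [dif_pos (show T + (i : ℕ) + 1 < L by omega)]
      congr 1 <;> (apply congrArg; apply Fin.ext; simp [Fin.val_last]; omega)
    rw [hA, hB, hC]
    have hsplit : L - 1 = T + (L - T - 1) := by omega
    rw [hsplit, Finset.prod_range_add, ← mul_assoc]
  · have key : ∑ u : windowSpace P T,
        (inducedRho P φ T u) ^ 2 / (inducedSigma P π T u) = ∑ a, φ a ^ 2 / π a := by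
      set p : (Fin (T+1) → Fin n) → Prop :=
        fun u => 0 < ∏ i : Fin T, P (u i.castSucc) (u i.succ) with hp
      set F : (Fin (T+1) → Fin n) → ℝ :=
        fun u => φ (u 0) ^ 2 / π (u 0) * ∏ i : Fin T, P (u i.castSucc) (u i.succ) with hF
      have step1 : ∑ u : windowSpace P T,
          (inducedRho P φ T u) ^ 2 / (inducedSigma P π T u)
          = ∑ u : windowSpace P T, F u.1 := by
        apply Finset.sum_congr rfl
        intro u _
        have hw : (0:ℝ) < ∏ i : Fin T, P (u.1 i.castSucc) (u.1 i.succ) := u.2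
        have hπ0 : π (u.1 0) ≠ 0 := (hπpos _).ne'
        rw [hF]
        unfold inducedRho inducedSigma
        field_simp
      rw [step1]
      have step2 : ∑ u : windowSpace P T, F u.1 = ∑ a ∈ Finset.univ.filter p, F a :=
        (Finset.sum_subtype _ (by simp [hp]) F).symm
      rw [step2, Finset.sum_filter]
      have step3 : ∀ u : Fin (T+1) → Fin n, (if p u then F u else 0) = F u := by
        intro u
        by_cases h : p u
        · rw [if_pos h]
        · rw [if_neg h, hF]
          have hz : ∏ i : Fin T, P (u i.castSucc) (u i.succ) = 0 := by
            have hnn : 0 ≤ ∏ i : Fin T, P (u i.castSucc) (u i.succ) :=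
              Finset.prod_nonneg fun i _ => hPnn _ _
            rw [hp] at h
            push_neg at h
            linarith
          simp [hz]
      rw [Finset.sum_congr rfl (fun u _ => step3 u)]
      exact pathSum_aux hrow T (fun a => φ a ^ 2 / π a)
    unfold piNormR
    rw [key]
end

section
/- Let P be a regular Markov chain on state space [n] with stationary distribution π and Π = diag(π), let T ≥ 1, let α_1,…,α_T be real numbers with Σ_{r=1}^T |α_r| = 1, and let S and σ be the induced window state space and stationary distribution as above. Define f : S → ℝ^{n×n} by f(u_0,…,u_T) = (1/2)·( Σ_{r=1}^T (α_r/2)(e_{u_0} e_{u_r}ᵀ + e_{u_r} e_{u_0}ᵀ) − Σ_{r=1}^T (α_r/2)(ΠP^r + (ΠP^r)ᵀ) ). Then (1) Σ_{X∈S} σ_X f(X) = 0 (the zero n×n matrix), and (2) for every X ∈ S, f(X) is symmetric and ‖f(X)‖₂ ≤ 1. -/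
open scoped BigOperators Kronecker ComplexOrder
open Matrix

/-- The spectral (operator 2-)norm of a matrix. -/
noncomputable def matSpectralNorm {𝕜 : Type*} [RCLike 𝕜] {m n : Type*} [Fintype m] [Fintype n]
    (A : Matrix m n 𝕜) : ℝ :=
  sSup {r : ℝ | ∃ x : n → 𝕜, x ≠ 0 ∧
    r = Real.sqrt (∑ i, ‖(A *ᵥ x) i‖ ^ 2) / Real.sqrt (∑ j, ‖x j‖ ^ 2)}

section paths
variable {n : ℕ} {P : Matrix (Fin n) (Fin n) ℝ}

private lemma cons_sum {m : ℕ} {M : Type*} [AddCommMonoid M] (F : (Fin (m + 2) → Fin n) → M) :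
    ∑ u : Fin (m + 2) → Fin n, F u
      = ∑ c : Fin n, ∑ v : Fin (m + 1) → Fin n, F (Fin.cons c v) := by
  rw [← Equiv.sum_comp (Fin.consEquiv (fun _ : Fin (m + 2) => Fin n)) F,
    Fintype.sum_prod_type]
  rfl

private lemma cons_prod {m : ℕ} (c : Fin n) (v : Fin (m + 1) → Fin n) :
    (∏ i : Fin (m + 1), P ((Fin.cons c v : Fin (m+2) → Fin n) i.castSucc)
        ((Fin.cons c v : Fin (m+2) → Fin n) i.succ))
      = P c (v 0) * ∏ i : Fin m, P (v i.castSucc) (v i.succ) := by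
  rw [Fin.prod_univ_succ]
  congr 1

private lemma rowone (hP : IsMarkov P) :
    ∀ (m : ℕ) (a : Fin n),
      ∑ u : Fin (m + 1) → Fin n,
        (if u 0 = a then (1:ℝ) else 0) * ∏ i : Fin m, P (u i.castSucc) (u i.succ) = 1 := by
  intro m
  induction m with
  | zero =>
    intro a
    rw [← Equiv.sum_comp (Equiv.funUnique (Fin 1) (Fin n)).symm]
    simp
  | succ m ih =>
    intro a
    rw [cons_sum]
    have h1 : ∀ c : Fin n, ∑ v : Fin (m + 1) → Fin n,
        (if (Fin.cons c v : Fin (m+2) → Fin n) 0 = a then (1:ℝ) else 0) *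
          ∏ i : Fin (m + 1), P ((Fin.cons c v : Fin (m+2) → Fin n) i.castSucc)
            ((Fin.cons c v : Fin (m+2) → Fin n) i.succ)
        = if c = a then ∑ v : Fin (m + 1) → Fin n,
            P a (v 0) * ∏ i : Fin m, P (v i.castSucc) (v i.succ) else 0 := by
      intro c
      by_cases h : c = a
      · subst h
        rw [if_pos rfl]
        have hpt : ∀ v : Fin (m + 1) → Fin n,
            (if (Fin.cons c v : Fin (m+2) → Fin n) 0 = c then (1:ℝ) else 0) *
              ∏ i : Fin (m + 1), P ((Fin.cons c v : Fin (m+2) → Fin n) i.castSucc)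
                ((Fin.cons c v : Fin (m+2) → Fin n) i.succ)
            = P c (v 0) * ∏ i : Fin m, P (v i.castSucc) (v i.succ) := by
          intro v
          rw [cons_prod, Fin.cons_zero, if_pos rfl, one_mul]
        exact Finset.sum_congr rfl fun v _ => hpt v
      · simp [Fin.cons_zero, h]
    rw [Finset.sum_congr rfl fun c _ => h1 c, Finset.sum_ite_eq' Finset.univ a]
    simp only [Finset.mem_univ, if_pos]
    have h2 : ∀ v : Fin (m + 1) → Fin n,
        P a (v 0) * ∏ i : Fin m, P (v i.castSucc) (v i.succ)
        = ∑ c : Fin n, P a c * ((if v 0 = c then (1:ℝ) else 0) *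
            ∏ i : Fin m, P (v i.castSucc) (v i.succ)) := by
      intro v
      rw [Finset.sum_eq_single (v 0)]
      · simp
      · intro c _ hc; simp [Ne.symm hc]
      · intro h; exact absurd (Finset.mem_univ _) h
    rw [Finset.sum_congr rfl fun v _ => h2 v, Finset.sum_comm]
    have h3 : ∀ c : Fin n, ∑ v : Fin (m + 1) → Fin n,
        P a c * ((if v 0 = c then (1:ℝ) else 0) *
          ∏ i : Fin m, P (v i.castSucc) (v i.succ)) = P a c := by
      intro c
      rw [← Finset.mul_sum, ih c, mul_one]
    rw [Finset.sum_congr rfl fun c _ => h3 c, hP.2 a]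

private lemma keySum (hP : IsMarkov P) :
    ∀ (m : ℕ) (k : Fin (m + 1)) (a b : Fin n),
      ∑ u : Fin (m + 1) → Fin n,
        (if u 0 = a then (1:ℝ) else 0) * (∏ i : Fin m, P (u i.castSucc) (u i.succ)) *
          (if u k = b then (1:ℝ) else 0)
        = (P ^ (k : ℕ)) a b := by
  intro m
  induction m with
  | zero =>
    intro k a b
    have hk : k = 0 := by have := k.isLt; exact Fin.ext (by omega)
    subst hk
    rw [← Equiv.sum_comp (Equiv.funUnique (Fin 1) (Fin n)).symm]
    by_cases h : a = b
    · subst h; simp [Equiv.funUnique, Matrix.one_apply, Finset.sum_ite_eq']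
    · have h' : ¬ b = a := fun hba => h hba.symm
      simp [Equiv.funUnique, Matrix.one_apply, h, h', Finset.sum_ite_eq']
  | succ m ih =>
    intro k a b
    induction k using Fin.cases with
    | zero =>
      -- only the u with u 0 = a = b contribute
      by_cases h : a = b
      · subst h
        simp only [Fin.val_zero, pow_zero, Matrix.one_apply_eq]
        calc ∑ u : Fin (m + 2) → Fin n,
            (if u 0 = a then (1:ℝ) else 0) *
              (∏ i : Fin (m+1), P (u i.castSucc) (u i.succ)) *
              (if u 0 = a then (1:ℝ) else 0)
            = ∑ u : Fin (m + 2) → Fin n,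
              (if u 0 = a then (1:ℝ) else 0) *
                (∏ i : Fin (m+1), P (u i.castSucc) (u i.succ)) := by
              apply Finset.sum_congr rfl; intro u _
              by_cases h0 : u 0 = a <;> simp [h0]
          _ = 1 := rowone hP (m+1) a
      · rw [show ((0 : Fin (m+2)) : ℕ) = 0 from rfl, pow_zero, Matrix.one_apply_ne h]
        apply Finset.sum_eq_zero; intro u _
        by_cases h0 : u 0 = a
        · have hb : ¬ (u 0 = b) := fun hb => h ((h0.symm.trans hb))
          simp [h0, hb, h]
        · simp [h0]
    | succ j =>
      rw [cons_sum]
      have h1 : ∀ c : Fin n, ∑ v : Fin (m + 1) → Fin n,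
          (if (Fin.cons c v : Fin (m+2) → Fin n) 0 = a then (1:ℝ) else 0) *
            (∏ i : Fin (m+1), P ((Fin.cons c v : Fin (m+2) → Fin n) i.castSucc)
              ((Fin.cons c v : Fin (m+2) → Fin n) i.succ)) *
            (if (Fin.cons c v : Fin (m+2) → Fin n) j.succ = b then (1:ℝ) else 0)
          = if c = a then ∑ v : Fin (m + 1) → Fin n,
              P a (v 0) * ((∏ i : Fin m, P (v i.castSucc) (v i.succ)) *
                (if v j = b then (1:ℝ) else 0)) else 0 := by
        intro c
        by_cases h : c = a
        · subst h
          rw [if_pos rfl]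
          have hpt : ∀ v : Fin (m + 1) → Fin n,
              (if (Fin.cons c v : Fin (m+2) → Fin n) 0 = c then (1:ℝ) else 0) *
                (∏ i : Fin (m+1), P ((Fin.cons c v : Fin (m+2) → Fin n) i.castSucc)
                  ((Fin.cons c v : Fin (m+2) → Fin n) i.succ)) *
                (if (Fin.cons c v : Fin (m+2) → Fin n) j.succ = b then (1:ℝ) else 0)
              = P c (v 0) * ((∏ i : Fin m, P (v i.castSucc) (v i.succ)) *
                  (if v j = b then (1:ℝ) else 0)) := by
            intro v
            rw [cons_prod, Fin.cons_zero, Fin.cons_succ, if_pos rfl, one_mul]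
            ring
          exact Finset.sum_congr rfl fun v _ => hpt v
        · simp [Fin.cons_zero, h]
      rw [Finset.sum_congr rfl fun c _ => h1 c, Finset.sum_ite_eq' Finset.univ a]
      simp only [Finset.mem_univ, if_pos]
      have h2 : ∀ v : Fin (m + 1) → Fin n,
          P a (v 0) * ((∏ i : Fin m, P (v i.castSucc) (v i.succ)) *
            (if v j = b then (1:ℝ) else 0))
          = ∑ c : Fin n, P a c * ((if v 0 = c then (1:ℝ) else 0) *
              (∏ i : Fin m, P (v i.castSucc) (v i.succ)) *
              (if v j = b then (1:ℝ) else 0)) := by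
        intro v
        rw [Finset.sum_eq_single (v 0)]
        · simp [mul_assoc]
        · intro c _ hc; simp [Ne.symm hc]
        · intro h; exact absurd (Finset.mem_univ _) h
      rw [Finset.sum_congr rfl fun v _ => h2 v, Finset.sum_comm]
      have h3 : ∀ c : Fin n, ∑ v : Fin (m + 1) → Fin n,
          P a c * ((if v 0 = c then (1:ℝ) else 0) *
            (∏ i : Fin m, P (v i.castSucc) (v i.succ)) *
            (if v j = b then (1:ℝ) else 0)) = P a c * (P ^ (j : ℕ)) c b := by
        intro c
        rw [← Finset.mul_sum, ih j c b]
      rw [Finset.sum_congr rfl fun c _ => h3 c]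
      have : (P ^ ((j.succ : Fin (m+2)) : ℕ)) a b = (P * P ^ (j : ℕ)) a b := by
        rw [Fin.val_succ, pow_succ']
      rw [this, Matrix.mul_apply]
end paths

section anal
variable {n : ℕ}

private noncomputable def EN {n : ℕ} (v : Fin n → ℝ) : ℝ := Real.sqrt (∑ i, v i ^ 2)

private lemma EN_eq (v : Fin n → ℝ) :
    EN v = ‖(WithLp.equiv 2 (Fin n → ℝ)).symm v‖ := by
  rw [EN, EuclideanSpace.norm_eq]
  congr 1
  apply Finset.sum_congr rfl
  intro i _
  rw [Real.norm_eq_abs, sq_abs]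
  rfl

private lemma EN_nonneg (v : Fin n → ℝ) : 0 ≤ EN v := Real.sqrt_nonneg _

private lemma EN_mono {u v : Fin n → ℝ} (h : ∑ i, u i ^ 2 ≤ ∑ i, v i ^ 2) :
    EN u ≤ EN v := Real.sqrt_le_sqrt h

private lemma EN_add (u v : Fin n → ℝ) : EN (u + v) ≤ EN u + EN v := by
  rw [EN_eq, EN_eq, EN_eq]
  exact norm_add_le ((WithLp.equiv 2 (Fin n → ℝ)).symm u) ((WithLp.equiv 2 (Fin n → ℝ)).symm v)

private lemma EN_sub (u v : Fin n → ℝ) : EN (u - v) ≤ EN u + EN v := by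
  rw [EN_eq, EN_eq, EN_eq]
  exact norm_sub_le ((WithLp.equiv 2 (Fin n → ℝ)).symm u) ((WithLp.equiv 2 (Fin n → ℝ)).symm v)

private lemma EN_smul (c : ℝ) (v : Fin n → ℝ) : EN (c • v) = |c| * EN v := by
  rw [EN_eq, EN_eq]
  have : (WithLp.equiv 2 (Fin n → ℝ)).symm (c • v)
      = c • (WithLp.equiv 2 (Fin n → ℝ)).symm v := rfl
  rw [this, norm_smul, Real.norm_eq_abs]

private lemma EN_sum {ι : Type*} (s : Finset ι) (g : ι → Fin n → ℝ) :
    EN (∑ i ∈ s, g i) ≤ ∑ i ∈ s, EN (g i) := by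
  classical
  induction s using Finset.induction_on with
  | empty => simp [EN]
  | insert x s hx ih =>
    rw [Finset.sum_insert hx, Finset.sum_insert hx]
    exact le_trans (EN_add _ _) (by linarith)

/-- Schur-type bound: nonneg entries, row sums ≤ 1, column sums ≤ 1 ⇒ `‖M x‖ ≤ ‖x‖`. -/
private lemma EN_schur (M : Matrix (Fin n) (Fin n) ℝ)
    (h0 : ∀ i j, 0 ≤ M i j) (hrow : ∀ i, ∑ j, M i j ≤ 1) (hcol : ∀ j, ∑ i, M i j ≤ 1)
    (x : Fin n → ℝ) : EN (M *ᵥ x) ≤ EN x := by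
  apply EN_mono
  have step1 : ∀ i, ((M *ᵥ x) i) ^ 2 ≤ ∑ j, M i j * x j ^ 2 := by
    intro i
    have hcs : ((M *ᵥ x) i) ^ 2 ≤ (∑ j, M i j) * ∑ j, M i j * x j ^ 2 := by
      have h1 : (M *ᵥ x) i = ∑ j, Real.sqrt (M i j) * (Real.sqrt (M i j) * x j) := by
        rw [Matrix.mulVec, dotProduct]
        apply Finset.sum_congr rfl
        intro j _
        rw [← mul_assoc, Real.mul_self_sqrt (h0 i j)]
      have h2 := Finset.sum_mul_sq_le_sq_mul_sq Finset.univ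
        (fun j => Real.sqrt (M i j)) (fun j => Real.sqrt (M i j) * x j)
      rw [← h1] at h2
      calc ((M *ᵥ x) i) ^ 2
          ≤ (∑ j, Real.sqrt (M i j) ^ 2) * ∑ j, (Real.sqrt (M i j) * x j) ^ 2 := h2
        _ = (∑ j, M i j) * ∑ j, M i j * x j ^ 2 := by
            congr 1 <;> apply Finset.sum_congr rfl <;> intro j _
            · exact Real.sq_sqrt (h0 i j)
            · rw [mul_pow, Real.sq_sqrt (h0 i j)]
    refine le_trans hcs ?_
    have hnn : 0 ≤ ∑ j, M i j * x j ^ 2 :=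
      Finset.sum_nonneg fun j _ => mul_nonneg (h0 i j) (sq_nonneg _)
    calc (∑ j, M i j) * ∑ j, M i j * x j ^ 2
        ≤ 1 * ∑ j, M i j * x j ^ 2 := mul_le_mul_of_nonneg_right (hrow i) hnn
      _ = _ := one_mul _
  calc ∑ i, ((M *ᵥ x) i) ^ 2
      ≤ ∑ i, ∑ j, M i j * x j ^ 2 := Finset.sum_le_sum fun i _ => step1 i
    _ = ∑ j, (∑ i, M i j) * x j ^ 2 := by
        rw [Finset.sum_comm]
        exact Finset.sum_congr rfl fun j _ => (Finset.sum_mul _ _ _).symm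
    _ ≤ ∑ j, x j ^ 2 := by
        apply Finset.sum_le_sum
        intro j _
        calc (∑ i, M i j) * x j ^ 2 ≤ 1 * x j ^ 2 :=
              mul_le_mul_of_nonneg_right (hcol j) (sq_nonneg _)
          _ = x j ^ 2 := one_mul _

private lemma EN_std (a b : Fin n) (x : Fin n → ℝ) :
    EN (Matrix.single a b (1:ℝ) *ᵥ x) ≤ EN x := by
  apply EN_mono
  have h1 : ∀ i, (Matrix.single a b (1:ℝ) *ᵥ x) i = if a = i then x b else 0 := by
    intro i
    by_cases h : a = i
    · subst h; simp [Matrix.mulVec, dotProduct, Matrix.single, Finset.sum_ite_eq]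
    · simp [Matrix.mulVec, dotProduct, Matrix.single, h]
  calc ∑ i, ((Matrix.single a b (1:ℝ) *ᵥ x) i) ^ 2
      = ∑ i, (if a = i then x b ^ 2 else 0) := by
        apply Finset.sum_congr rfl; intro i _
        rw [h1 i]; by_cases h : a = i <;> simp [h]
    _ = x b ^ 2 := by rw [Finset.sum_ite_eq Finset.univ a]; simp
    _ ≤ ∑ j, x j ^ 2 :=
        Finset.single_le_sum (fun j _ => sq_nonneg (x j)) (Finset.mem_univ b)

variable {P : Matrix (Fin n) (Fin n) ℝ} {π : Fin n → ℝ}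

private lemma Pk_nonneg (hP : IsMarkov P) (k : ℕ) : ∀ i j, 0 ≤ (P ^ k) i j := by
  induction k with
  | zero => intro i j; rw [pow_zero]; by_cases h : i = j <;> simp [Matrix.one_apply, h]
  | succ k ih =>
    intro i j
    rw [pow_succ, Matrix.mul_apply]
    exact Finset.sum_nonneg fun c _ => mul_nonneg (ih i c) (hP.1 c j)

private lemma Pk_rowsum (hP : IsMarkov P) (k : ℕ) : ∀ i, ∑ j, (P ^ k) i j = 1 := by
  induction k with
  | zero => intro i; simp [Matrix.one_apply]
  | succ k ih =>
    intro i
    simp only [pow_succ, Matrix.mul_apply]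
    rw [Finset.sum_comm]
    calc ∑ c, ∑ j, (P ^ k) i c * P c j = ∑ c, (P ^ k) i c * ∑ j, P c j := by
          exact Finset.sum_congr rfl fun c _ => (Finset.mul_sum _ _ _).symm
      _ = ∑ c, (P ^ k) i c := by
          exact Finset.sum_congr rfl fun c _ => by rw [hP.2 c, mul_one]
      _ = 1 := ih i

private lemma Pk_colsum (hπ : IsStationaryMC P π) (k : ℕ) :
    ∀ j, ∑ i, π i * (P ^ k) i j = π j := by
  induction k with
  | zero => intro j; simp [Matrix.one_apply, Finset.sum_ite_eq' Finset.univ j]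
  | succ k ih =>
    intro j
    simp only [pow_succ, Matrix.mul_apply]
    calc ∑ i, π i * ∑ c, (P ^ k) i c * P c j
        = ∑ i, ∑ c, π i * ((P ^ k) i c * P c j) :=
          Finset.sum_congr rfl fun i _ => Finset.mul_sum _ _ _
      _ = ∑ c, ∑ i, π i * ((P ^ k) i c * P c j) := Finset.sum_comm
      _ = ∑ c, (∑ i, π i * (P ^ k) i c) * P c j := by
          apply Finset.sum_congr rfl; intro c _
          rw [Finset.sum_mul]
          apply Finset.sum_congr rfl; intro i _; ring
      _ = ∑ c, π c * P c j := by
          exact Finset.sum_congr rfl fun c _ => by rw [ih c]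
      _ = π j := hπ.2.2 j

private lemma pi_le_one (hπ : IsStationaryMC P π) (a : Fin n) : π a ≤ 1 := by
  have := Finset.single_le_sum (f := π) (fun i _ => (hπ.1 i).le) (Finset.mem_univ a)
  rw [hπ.2.1] at this
  exact this

/-- the `Π P^k` matrix satisfies the Schur hypotheses. -/
private lemma EN_piP (hP : IsMarkov P) (hπ : IsStationaryMC P π) (k : ℕ) (x : Fin n → ℝ) :
    EN ((Matrix.diagonal π * P ^ k) *ᵥ x) ≤ EN x := by
  apply EN_schur
  · intro i j; rw [Matrix.diagonal_mul]; exact mul_nonneg (hπ.1 i).le (Pk_nonneg hP k i j)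
  · intro i
    calc ∑ j, (Matrix.diagonal π * P ^ k) i j = ∑ j, π i * (P ^ k) i j :=
          Finset.sum_congr rfl fun j _ => Matrix.diagonal_mul _ _ _ _
      _ = π i * ∑ j, (P ^ k) i j := (Finset.mul_sum _ _ _).symm
      _ = π i := by rw [Pk_rowsum hP k i, mul_one]
      _ ≤ 1 := pi_le_one hπ i
  · intro j
    calc ∑ i, (Matrix.diagonal π * P ^ k) i j = ∑ i, π i * (P ^ k) i j :=
          Finset.sum_congr rfl fun i _ => Matrix.diagonal_mul _ _ _ _
      _ = π j := Pk_colsum hπ k j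
      _ ≤ 1 := pi_le_one hπ j

private lemma EN_piPT (hP : IsMarkov P) (hπ : IsStationaryMC P π) (k : ℕ) (x : Fin n → ℝ) :
    EN ((Matrix.diagonal π * P ^ k)ᵀ *ᵥ x) ≤ EN x := by
  apply EN_schur
  · intro i j
    rw [Matrix.transpose_apply, Matrix.diagonal_mul]
    exact mul_nonneg (hπ.1 j).le (Pk_nonneg hP k j i)
  · intro i
    calc ∑ j, (Matrix.diagonal π * P ^ k)ᵀ i j = ∑ j, π j * (P ^ k) j i :=
          Finset.sum_congr rfl fun j _ => by rw [Matrix.transpose_apply, Matrix.diagonal_mul]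
      _ = π i := Pk_colsum hπ k i
      _ ≤ 1 := pi_le_one hπ i
  · intro j
    calc ∑ i, (Matrix.diagonal π * P ^ k)ᵀ i j = ∑ i, π j * (P ^ k) j i :=
          Finset.sum_congr rfl fun i _ => by rw [Matrix.transpose_apply, Matrix.diagonal_mul]
      _ = π j * ∑ i, (P ^ k) j i := (Finset.mul_sum _ _ _).symm
      _ = π j := by rw [Pk_rowsum hP k j, mul_one]
      _ ≤ 1 := pi_le_one hπ j

private lemma sum_mulVec {ι : Type*} (s : Finset ι) (M : ι → Matrix (Fin n) (Fin n) ℝ)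
    (x : Fin n → ℝ) : (∑ i ∈ s, M i) *ᵥ x = ∑ i ∈ s, M i *ᵥ x := by
  classical
  induction s using Finset.induction_on with
  | empty => simp
  | insert x s hx ih =>
    rw [Finset.sum_insert hx, Finset.sum_insert hx, Matrix.add_mulVec, ih]
end anal

section window
variable {n T : ℕ} {P : Matrix (Fin n) (Fin n) ℝ} {π : Fin n → ℝ}

private lemma std_transpose (a b : Fin n) (c : ℝ) :
    (Matrix.single a b c)ᵀ = Matrix.single b a c := by
  ext i j
  simp only [Matrix.transpose_apply, Matrix.single, Matrix.of_apply]
  by_cases h1 : a = j <;> by_cases h2 : b = i <;> simp [h1, h2]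

private lemma window_sum {M : Type*} [AddCommMonoid M] [Module ℝ M] (hP : IsMarkov P)
    (g : (Fin (T + 1) → Fin n) → M) :
    ∑ X : windowSpace P T, (∏ i : Fin T, P (X.1 i.castSucc) (X.1 i.succ)) • g X.1
      = ∑ u : Fin (T + 1) → Fin n, (∏ i : Fin T, P (u i.castSucc) (u i.succ)) • g u := by
  classical
  have h1 : ∑ u ∈ Finset.univ.filter
        (fun u : Fin (T + 1) → Fin n => 0 < ∏ i : Fin T, P (u i.castSucc) (u i.succ)),
        (∏ i : Fin T, P (u i.castSucc) (u i.succ)) • g u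
      = ∑ X : windowSpace P T, (∏ i : Fin T, P (X.1 i.castSucc) (X.1 i.succ)) • g X.1 :=
    Finset.sum_subtype _ (by simp) _
  rw [← h1]
  apply Finset.sum_subset (Finset.subset_univ _)
  intro u _ hu
  have hnp : ¬ 0 < ∏ i : Fin T, P (u i.castSucc) (u i.succ) := by
    intro hc
    exact hu (Finset.mem_filter.mpr ⟨Finset.mem_univ _, hc⟩)
  have h0 : ∏ i : Fin T, P (u i.castSucc) (u i.succ) = 0 :=
    le_antisymm (not_lt.mp hnp) (Finset.prod_nonneg fun i _ => hP.1 _ _)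
  rw [h0, zero_smul]

private lemma claimSigma (hP : IsMarkov P) (hπ : IsStationaryMC P π) :
    ∑ X : windowSpace P T, inducedSigma P π T X = 1 := by
  have h1 : ∀ X : windowSpace P T, inducedSigma P π T X
      = (∏ i : Fin T, P (X.1 i.castSucc) (X.1 i.succ)) • π (X.1 0) := by
    intro X; rw [inducedSigma, smul_eq_mul, mul_comm]
  rw [Finset.sum_congr rfl fun X _ => h1 X,
    window_sum hP (g := fun u => π (u 0))]
  have h2 : ∀ u : Fin (T + 1) → Fin n,
      (∏ i : Fin T, P (u i.castSucc) (u i.succ)) • π (u 0)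
      = ∑ a : Fin n, π a * ((if u 0 = a then (1:ℝ) else 0) *
          ∏ i : Fin T, P (u i.castSucc) (u i.succ)) := by
    intro u
    rw [Finset.sum_eq_single (u 0)]
    · simp [smul_eq_mul, mul_comm]
    · intro c _ hc; simp [Ne.symm hc]
    · intro h; exact absurd (Finset.mem_univ _) h
  rw [Finset.sum_congr rfl fun u _ => h2 u, Finset.sum_comm]
  calc ∑ a : Fin n, ∑ u : Fin (T + 1) → Fin n,
        π a * ((if u 0 = a then (1:ℝ) else 0) * ∏ i : Fin T, P (u i.castSucc) (u i.succ))
      = ∑ a : Fin n, π a := by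
        apply Finset.sum_congr rfl; intro a _
        rw [← Finset.mul_sum, rowone hP T a, mul_one]
    _ = 1 := hπ.2.1

private lemma claimStd (hP : IsMarkov P) (hπ : IsStationaryMC P π) (k : Fin (T + 1)) :
    ∑ X : windowSpace P T,
        inducedSigma P π T X • Matrix.single (X.1 0) (X.1 k) (1:ℝ)
      = Matrix.diagonal π * P ^ (k : ℕ) := by
  have h1 : ∀ X : windowSpace P T,
      inducedSigma P π T X • Matrix.single (X.1 0) (X.1 k) (1:ℝ)
      = (∏ i : Fin T, P (X.1 i.castSucc) (X.1 i.succ)) •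
          (π (X.1 0) • Matrix.single (X.1 0) (X.1 k) (1:ℝ)) := by
    intro X; rw [inducedSigma, smul_smul, mul_comm]
  rw [Finset.sum_congr rfl fun X _ => h1 X,
    window_sum hP (g := fun u => π (u 0) • Matrix.single (u 0) (u k) (1:ℝ))]
  ext a b
  rw [Matrix.sum_apply, Matrix.diagonal_mul, ← keySum hP T k a b, Finset.mul_sum]
  apply Finset.sum_congr rfl; intro u _
  simp only [Matrix.smul_apply, smul_eq_mul, Matrix.single, Matrix.of_apply]
  by_cases h0 : u 0 = a <;> by_cases hk : u k = b <;>
    simp [h0, hk] <;> ring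

private lemma claimStdT (hP : IsMarkov P) (hπ : IsStationaryMC P π) (k : Fin (T + 1)) :
    ∑ X : windowSpace P T,
        inducedSigma P π T X • Matrix.single (X.1 k) (X.1 0) (1:ℝ)
      = (Matrix.diagonal π * P ^ (k : ℕ))ᵀ := by
  have h1 : ∀ X : windowSpace P T,
      inducedSigma P π T X • Matrix.single (X.1 k) (X.1 0) (1:ℝ)
      = inducedSigma P π T X • (Matrix.single (X.1 0) (X.1 k) (1:ℝ))ᵀ := by
    intro X; rw [std_transpose]
  rw [Finset.sum_congr rfl fun X _ => h1 X]
  have h2 : ∑ X : windowSpace P T,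
      inducedSigma P π T X • (Matrix.single (X.1 0) (X.1 k) (1:ℝ))ᵀ
      = (∑ X : windowSpace P T,
          inducedSigma P π T X • Matrix.single (X.1 0) (X.1 k) (1:ℝ))ᵀ := by
    rw [Matrix.transpose_sum]
    apply Finset.sum_congr rfl; intro X _
    rw [Matrix.transpose_smul]
  rw [h2, claimStd hP hπ k]

end window

theorem stmt_8 {n T : ℕ} (hT : 1 ≤ T)
    (P : Matrix (Fin n) (Fin n) ℝ) (π : Fin n → ℝ)
    (hP : IsMarkov P) (hreg : IsRegularMC P) (hπ : IsStationaryMC P π)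
    (α : Fin T → ℝ) (hα : ∑ r, |α r| = 1)
    (f : windowSpace P T → Matrix (Fin n) (Fin n) ℝ)
    (hf : ∀ X : windowSpace P T, f X =
      (1 / 2 : ℝ) •
        ((∑ r : Fin T, (α r / 2) •
            (Matrix.single (X.1 0) (X.1 r.succ) (1 : ℝ) +
             Matrix.single (X.1 r.succ) (X.1 0) (1 : ℝ))) -
         ∑ r : Fin T, (α r / 2) •
            (Matrix.diagonal π * P ^ ((r : ℕ) + 1) +
             (Matrix.diagonal π * P ^ ((r : ℕ) + 1))ᵀ))) :
    (∑ X, inducedSigma P π T X • f X = 0) ∧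
      ∀ X, (f X)ᵀ = f X ∧ matSpectralNorm (f X) ≤ 1 := by
  set B : Matrix (Fin n) (Fin n) ℝ :=
    ∑ r : Fin T, (α r / 2) •
      (Matrix.diagonal π * P ^ ((r : ℕ) + 1) +
        (Matrix.diagonal π * P ^ ((r : ℕ) + 1))ᵀ) with hB
  constructor
  · -- part 1
    have hsum : ∑ X, inducedSigma P π T X • f X
        = ∑ X, (1/2 : ℝ) • (inducedSigma P π T X •
            (∑ r : Fin T, (α r / 2) •
              (Matrix.single (X.1 0) (X.1 r.succ) (1 : ℝ) +
               Matrix.single (X.1 r.succ) (X.1 0) (1 : ℝ)))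
            - inducedSigma P π T X • B) := by
      apply Finset.sum_congr rfl; intro X _
      rw [hf X, smul_comm, smul_sub]
    rw [hsum, ← Finset.smul_sum, Finset.sum_sub_distrib]
    have hBsum : ∑ X, inducedSigma P π T X • B = B := by
      rw [← Finset.sum_smul, claimSigma hP hπ, one_smul]
    have hAsum : ∑ X : windowSpace P T, inducedSigma P π T X •
        (∑ r : Fin T, (α r / 2) •
          (Matrix.single (X.1 0) (X.1 r.succ) (1 : ℝ) +
           Matrix.single (X.1 r.succ) (X.1 0) (1 : ℝ))) = B := by
      calc ∑ X : windowSpace P T, inducedSigma P π T X •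
            (∑ r : Fin T, (α r / 2) •
              (Matrix.single (X.1 0) (X.1 r.succ) (1 : ℝ) +
               Matrix.single (X.1 r.succ) (X.1 0) (1 : ℝ)))
          = ∑ X : windowSpace P T, ∑ r : Fin T, (α r / 2) •
              (inducedSigma P π T X • Matrix.single (X.1 0) (X.1 r.succ) (1 : ℝ) +
               inducedSigma P π T X • Matrix.single (X.1 r.succ) (X.1 0) (1 : ℝ)) := by
            apply Finset.sum_congr rfl; intro X _
            rw [Finset.smul_sum]
            apply Finset.sum_congr rfl; intro r _
            rw [smul_comm, smul_add]
        _ = ∑ r : Fin T, ∑ X : windowSpace P T, (α r / 2) •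
              (inducedSigma P π T X • Matrix.single (X.1 0) (X.1 r.succ) (1 : ℝ) +
               inducedSigma P π T X • Matrix.single (X.1 r.succ) (X.1 0) (1 : ℝ)) :=
            Finset.sum_comm
        _ = B := by
            rw [hB]
            apply Finset.sum_congr rfl; intro r _
            rw [← Finset.smul_sum, Finset.sum_add_distrib,
              claimStd hP hπ r.succ, claimStdT hP hπ r.succ, Fin.val_succ]
    rw [hAsum, hBsum, sub_self, smul_zero]
  · -- part 2
    intro X
    constructor
    · -- symmetry
      rw [hf X, Matrix.transpose_smul, Matrix.transpose_sub,
        Matrix.transpose_sum, Matrix.transpose_sum]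
      congr 1
      congr 1
      · apply Finset.sum_congr rfl; intro r _
        rw [Matrix.transpose_smul, Matrix.transpose_add, std_transpose, std_transpose,
          add_comm]
      · apply Finset.sum_congr rfl; intro r _
        rw [Matrix.transpose_smul, Matrix.transpose_add, Matrix.transpose_transpose,
          add_comm]
    · -- spectral norm bound
      have hb : ∀ x : Fin n → ℝ, EN (f X *ᵥ x) ≤ EN x := by
        intro x
        have gen : ∀ (M1 M2 : Fin T → Matrix (Fin n) (Fin n) ℝ),
            (∀ r, EN (M1 r *ᵥ x) ≤ EN x) → (∀ r, EN (M2 r *ᵥ x) ≤ EN x) →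
            EN (∑ r : Fin T, ((α r / 2) • (M1 r + M2 r)) *ᵥ x) ≤ EN x := by
          intro M1 M2 hM1 hM2
          calc EN (∑ r : Fin T, ((α r / 2) • (M1 r + M2 r)) *ᵥ x)
              ≤ ∑ r : Fin T, EN (((α r / 2) • (M1 r + M2 r)) *ᵥ x) := EN_sum _ _
            _ ≤ ∑ r : Fin T, |α r| / 2 * (2 * EN x) := by
                apply Finset.sum_le_sum; intro r _
                rw [Matrix.smul_mulVec, EN_smul, abs_div, abs_two]
                refine mul_le_mul_of_nonneg_left ?_ (by positivity)
                rw [Matrix.add_mulVec]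
                have g1 := hM1 r
                have g2 := hM2 r
                calc EN (M1 r *ᵥ x + M2 r *ᵥ x)
                    ≤ EN (M1 r *ᵥ x) + EN (M2 r *ᵥ x) := EN_add _ _
                  _ ≤ 2 * EN x := by linarith
            _ = EN x := by rw [← Finset.sum_mul, ← Finset.sum_div, hα]; ring
        rw [hf X, hB, Matrix.smul_mulVec, Matrix.sub_mulVec, sum_mulVec, sum_mulVec,
          EN_smul]
        have h12 : |(1/2 : ℝ)| = 1/2 := by norm_num
        rw [h12]
        have hA := gen
          (fun r => Matrix.single (X.1 0) (X.1 r.succ) (1 : ℝ))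
          (fun r => Matrix.single (X.1 r.succ) (X.1 0) (1 : ℝ))
          (fun r => EN_std _ _ x) (fun r => EN_std _ _ x)
        have hBb := gen
          (fun r => Matrix.diagonal π * P ^ ((r : ℕ) + 1))
          (fun r => (Matrix.diagonal π * P ^ ((r : ℕ) + 1))ᵀ)
          (fun r => EN_piP hP hπ _ x) (fun r => EN_piPT hP hπ _ x)
        have hsub := EN_sub
          (∑ r : Fin T, ((α r / 2) •
            (Matrix.single (X.1 0) (X.1 r.succ) (1 : ℝ) +
             Matrix.single (X.1 r.succ) (X.1 0) (1 : ℝ))) *ᵥ x)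
          (∑ r : Fin T, ((α r / 2) •
            (Matrix.diagonal π * P ^ ((r : ℕ) + 1) +
             (Matrix.diagonal π * P ^ ((r : ℕ) + 1))ᵀ)) *ᵥ x)
        linarith
      refine Real.sSup_le ?_ zero_le_one
      rintro s ⟨x, hx, rfl⟩
      have h1 : √(∑ i, ‖(f X *ᵥ x) i‖ ^ 2) = EN (f X *ᵥ x) := by
        rw [EN]; congr 1
        exact Finset.sum_congr rfl fun i _ => by rw [Real.norm_eq_abs, sq_abs]
      have h2 : √(∑ j, ‖x j‖ ^ 2) = EN x := by
        rw [EN]; congr 1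
        exact Finset.sum_congr rfl fun j _ => by rw [Real.norm_eq_abs, sq_abs]
      rw [h1, h2]
      exact div_le_one_of_le₀ (hb x) (EN_nonneg x)
end

section
/- Let P be a regular Markov chain on state space [N] with stationary distribution π and spectral expansion λ(P), let m ≥ 1, and let P̃ := P ⊗ I_m ∈ ℝ^{Nm×Nm}. Define λ(P̃) as the supremum of ‖P̃ᵀx‖_π/‖x‖_π over all nonzero x ∈ ℂ^{Nm} that are π-orthogonal to the subspace U = {π ⊗ w : w ∈ ℂ^m} (i.e., ⟨x,u⟩_π = 0 for all u ∈ U). Then λ(P̃) = λ(P). -/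
open scoped BigOperators Kronecker ComplexOrder
open Matrix

/-- The spectral (operator 2-)norm of a matrix. -/
noncomputable def spectralNormMat {𝕜 : Type*} [RCLike 𝕜] {m n : Type*} [Fintype m] [Fintype n]
    (A : Matrix m n 𝕜) : ℝ :=
  sSup {r : ℝ | ∃ x : n → 𝕜, x ≠ 0 ∧
    r = Real.sqrt (∑ i, ‖(A *ᵥ x) i‖ ^ 2) / Real.sqrt (∑ j, ‖x j‖ ^ 2)}

/-- The `π`-inner product `⟨x, y⟩_π = y* (Π⁻¹ ⊗ I_m) x` on `ℂ^{N m}`. -/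
noncomputable def piInnerKron {N m : ℕ} (π : Fin N → ℝ) (x y : Fin N × Fin m → ℂ) : ℂ :=
  ∑ p, (starRingEnd ℂ) (y p) * x p / (π p.1 : ℂ)

/-- The `π`-norm on `ℂ^{N m}`. -/
noncomputable def piNormKron {N m : ℕ} (π : Fin N → ℝ) (x : Fin N × Fin m → ℂ) : ℝ :=
  Real.sqrt (∑ p, ‖x p‖ ^ 2 / π p.1)

/-- Membership in the subspace `U = {π ⊗ w : w ∈ ℂ^m}`. -/
def memU {N m : ℕ} (π : Fin N → ℝ) (x : Fin N × Fin m → ℂ) : Prop :=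
  ∃ w : Fin m → ℂ, ∀ p, x p = (π p.1 : ℂ) * w p.2

/-- `π`-orthogonality to the subspace `U = {π ⊗ w : w ∈ ℂ^m}`. -/
noncomputable def perpU {N m : ℕ} (π : Fin N → ℝ) (x : Fin N × Fin m → ℂ) : Prop :=
  ∀ w : Fin m → ℂ, piInnerKron π x (fun p => (π p.1 : ℂ) * w p.2) = 0

lemma kron_mulVec {N m : ℕ} (A : Matrix (Fin N) (Fin N) ℂ) (x : Fin N × Fin m → ℂ)
    (p : Fin N × Fin m) :
    ((A ⊗ₖ (1 : Matrix (Fin m) (Fin m) ℂ))ᵀ *ᵥ x) p = (Aᵀ *ᵥ (fun i => x (i, p.2))) p.1 := by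
  simp [Matrix.mulVec, dotProduct, Matrix.one_apply, Fintype.sum_prod_type,
    mul_ite, mul_zero, mul_one, ite_mul, zero_mul, Finset.sum_ite_eq, Finset.sum_ite_eq']

lemma sqrt_div_le {a b K : ℝ} (hK : 0 ≤ K) (hb : 0 ≤ b) (h : a ≤ K * b) :
    Real.sqrt a / Real.sqrt b ≤ Real.sqrt K := by
  rcases eq_or_lt_of_le hb with hb0 | hb0
  · have ha : a ≤ 0 := by nlinarith
    simp [Real.sqrt_eq_zero_of_nonpos ha, Real.sqrt_nonneg]
  · rw [div_le_iff₀ (Real.sqrt_pos.2 hb0), ← Real.sqrt_mul hK]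
    exact Real.sqrt_le_sqrt h

lemma ratio_sq {a b l : ℝ} (ha : 0 ≤ a) (hb : 0 < b) (h : Real.sqrt a / Real.sqrt b ≤ l) :
    a ≤ l ^ 2 * b := by
  have h1 : Real.sqrt a ≤ l * Real.sqrt b := (div_le_iff₀ (Real.sqrt_pos.2 hb)).1 h
  nlinarith [Real.sq_sqrt ha, Real.sq_sqrt hb.le, Real.sqrt_nonneg a, Real.sqrt_nonneg b]

lemma bound_sum {N : ℕ} (P : Matrix (Fin N) (Fin N) ℝ) (π : Fin N → ℝ)
    (hPnn : ∀ i j, 0 ≤ P i j) (hProw : ∀ i, ∑ j, P i j = 1)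
    (hπpos : ∀ i, 0 < π i) (hπsum : ∑ i, π i = 1) (x : Fin N → ℂ) :
    ∑ j, ‖((P.map Complex.ofReal)ᵀ *ᵥ x) j‖ ^ 2 / π j
      ≤ ((N : ℝ) * ∑ j, (π j)⁻¹) * ∑ i, ‖x i‖ ^ 2 / π i := by
  have hP1 : ∀ i j, P i j ≤ 1 := by
    intro i j
    calc P i j ≤ ∑ k, P i k := Finset.single_le_sum (fun k _ => hPnn i k) (Finset.mem_univ j)
    _ = 1 := hProw i
  set T := ∑ i, ‖x i‖ ^ 2 / π i with hT
  have hTnn : 0 ≤ T := Finset.sum_nonneg fun i _ => div_nonneg (sq_nonneg _) (hπpos i).le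
  have hsum2 : ∑ i, ‖x i‖ ^ 2 ≤ T := by
    apply Finset.sum_le_sum
    intro i _
    rw [le_div_iff₀ (hπpos i)]
    have hle1 : π i ≤ 1 := by
      calc π i ≤ ∑ k, π k := Finset.single_le_sum (fun k _ => (hπpos k).le) (Finset.mem_univ i)
      _ = 1 := hπsum
    nlinarith [sq_nonneg ‖x i‖]
  have hnorm : ∀ j, ‖((P.map Complex.ofReal)ᵀ *ᵥ x) j‖ ≤ ∑ i, ‖x i‖ := by
    intro j
    calc ‖∑ i, (P.map Complex.ofReal)ᵀ j i * x i‖ ≤ ∑ i, ‖(P.map Complex.ofReal)ᵀ j i * x i‖ :=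
          norm_sum_le _ _
    _ ≤ ∑ i, ‖x i‖ := by
        apply Finset.sum_le_sum
        intro i _
        rw [norm_mul]
        have : ‖(P.map Complex.ofReal)ᵀ j i‖ = P i j := by
          simp [Matrix.map_apply, Complex.norm_real, abs_of_nonneg (hPnn i j)]
        rw [this]
        nlinarith [norm_nonneg (x i), hPnn i j, hP1 i j]
  have hsq : ∀ j, ‖((P.map Complex.ofReal)ᵀ *ᵥ x) j‖ ^ 2 ≤ (N : ℝ) * T := by
    intro j
    calc ‖((P.map Complex.ofReal)ᵀ *ᵥ x) j‖ ^ 2 ≤ (∑ i, ‖x i‖) ^ 2 := by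
          nlinarith [norm_nonneg (((P.map Complex.ofReal)ᵀ *ᵥ x) j), hnorm j,
            Finset.sum_nonneg (fun i (_ : i ∈ Finset.univ) => norm_nonneg (x i))]
    _ ≤ (Finset.univ.card : ℝ) * ∑ i, ‖x i‖ ^ 2 := sq_sum_le_card_mul_sum_sq
    _ = (N : ℝ) * ∑ i, ‖x i‖ ^ 2 := by simp
    _ ≤ (N : ℝ) * T := mul_le_mul_of_nonneg_left hsum2 (Nat.cast_nonneg N)
  calc ∑ j, ‖((P.map Complex.ofReal)ᵀ *ᵥ x) j‖ ^ 2 / π j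
      ≤ ∑ j, (π j)⁻¹ * ((N : ℝ) * T) := by
        apply Finset.sum_le_sum
        intro j _
        rw [div_eq_inv_mul]
        exact mul_le_mul_of_nonneg_left (hsq j) (inv_nonneg.2 (hπpos j).le)
    _ = ((N : ℝ) * ∑ j, (π j)⁻¹) * T := by rw [← Finset.sum_mul]; ring

theorem stmt_10 {N m : ℕ} (hm : 1 ≤ m)
    (P : Matrix (Fin N) (Fin N) ℝ) (π : Fin N → ℝ)
    (hP : IsMarkov P) (hreg : IsRegularMC P) (hπ : IsStationaryMC P π) :
    sSup {r : ℝ | ∃ x : Fin N × Fin m → ℂ, x ≠ 0 ∧ perpU π x ∧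
        r = piNormKron π
              (((P.map Complex.ofReal) ⊗ₖ (1 : Matrix (Fin m) (Fin m) ℂ))ᵀ *ᵥ x) /
            piNormKron π x} = specExp P π := by
  obtain ⟨hPnn, hProw⟩ := hP
  obtain ⟨hπpos, hπsum, -⟩ := hπ
  set A := P.map Complex.ofReal with hA
  set K := (N : ℝ) * ∑ j, (π j)⁻¹ with hKdef
  have hK : 0 ≤ K := by
    apply mul_nonneg (Nat.cast_nonneg N)
    exact Finset.sum_nonneg fun j _ => inv_nonneg.2 (hπpos j).le
  set S1 := {r : ℝ | ∃ x : Fin N × Fin m → ℂ, x ≠ 0 ∧ perpU π x ∧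
        r = piNormKron π ((A ⊗ₖ (1 : Matrix (Fin m) (Fin m) ℂ))ᵀ *ᵥ x) / piNormKron π x}
        with hS1def
  set S2 := {r : ℝ | ∃ x : Fin N → ℂ, x ≠ 0 ∧ piInner π x (fun i => (π i : ℂ)) = 0 ∧
    r = piNorm π (Aᵀ *ᵥ x) / piNorm π x} with hS2def
  have hspec : specExp P π = sSup S2 := rfl
  -- basic positivity
  have hposN : ∀ x : Fin N → ℂ, x ≠ 0 → 0 < ∑ i, ‖x i‖ ^ 2 / π i := by
    intro x hx
    obtain ⟨i, hi⟩ := Function.ne_iff.1 hx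
    have hi' : x i ≠ 0 := hi
    apply Finset.sum_pos' (fun k _ => div_nonneg (sq_nonneg _) (hπpos k).le)
    exact ⟨i, Finset.mem_univ i, div_pos (pow_pos (norm_pos_iff.mpr hi') 2) (hπpos i)⟩
  have hposKr : ∀ x : Fin N × Fin m → ℂ, x ≠ 0 → 0 < ∑ p, ‖x p‖ ^ 2 / π p.1 := by
    intro x hx
    obtain ⟨p, hp⟩ := Function.ne_iff.1 hx
    have hp' : x p ≠ 0 := hp
    apply Finset.sum_pos' (fun q _ => div_nonneg (sq_nonneg _) (hπpos q.1).le)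
    exact ⟨p, Finset.mem_univ p, div_pos (pow_pos (norm_pos_iff.mpr hp') 2) (hπpos p.1)⟩
  -- decomposition of kron sums into columns
  have hdecomp : ∀ y : Fin N × Fin m → ℂ,
      ∑ p : Fin N × Fin m, ‖y p‖ ^ 2 / π p.1 = ∑ j : Fin m, ∑ i, ‖y (i, j)‖ ^ 2 / π i := by
    intro y
    rw [Fintype.sum_prod_type_right]
  have hnumdecomp : ∀ x : Fin N × Fin m → ℂ,
      ∑ p : Fin N × Fin m, ‖((A ⊗ₖ (1 : Matrix (Fin m) (Fin m) ℂ))ᵀ *ᵥ x) p‖ ^ 2 / π p.1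
        = ∑ j : Fin m, ∑ i, ‖(Aᵀ *ᵥ (fun i' => x (i', j))) i‖ ^ 2 / π i := by
    intro x
    rw [hdecomp]
    exact Finset.sum_congr rfl fun j _ => Finset.sum_congr rfl fun i _ => by
      rw [kron_mulVec]
  -- S2 is bounded above
  have hS2ub : ∀ r ∈ S2, r ≤ Real.sqrt K := by
    intro r hr
    obtain ⟨x, hx0, -, rfl⟩ := hr
    unfold piNorm
    exact sqrt_div_le hK (Finset.sum_nonneg fun i _ => div_nonneg (sq_nonneg _) (hπpos i).le)
      (bound_sum P π hPnn hProw hπpos hπsum x)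
  have hS2bdd : BddAbove S2 := ⟨Real.sqrt K, hS2ub⟩
  -- S1 is bounded above
  have hS1ub : ∀ r ∈ S1, r ≤ Real.sqrt K := by
    intro r hr
    obtain ⟨x, hx0, -, rfl⟩ := hr
    unfold piNormKron
    apply sqrt_div_le hK (Finset.sum_nonneg fun p _ => div_nonneg (sq_nonneg _) (hπpos p.1).le)
    rw [hnumdecomp, hdecomp, Finset.mul_sum]
    exact Finset.sum_le_sum fun j _ => bound_sum P π hPnn hProw hπpos hπsum _
  have hS1bdd : BddAbove S1 := ⟨Real.sqrt K, hS1ub⟩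
  -- every element of S1 and S2 is nonnegative
  have hS1nn : ∀ r ∈ S1, 0 ≤ r := by
    intro r hr
    obtain ⟨x, -, -, rfl⟩ := hr
    unfold piNormKron
    exact div_nonneg (Real.sqrt_nonneg _) (Real.sqrt_nonneg _)
  have hS2nn : ∀ r ∈ S2, 0 ≤ r := by
    intro r hr
    obtain ⟨x, -, -, rfl⟩ := hr
    unfold piNorm
    exact div_nonneg (Real.sqrt_nonneg _) (Real.sqrt_nonneg _)
  rw [hspec]
  apply le_antisymm
  · -- sSup S1 ≤ sSup S2
    apply Real.sSup_le
    · intro r hr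
      obtain ⟨x, hx0, hxperp, rfl⟩ := hr
      -- columns of x are orthogonal to π
      have hcol : ∀ j : Fin m, piInner π (fun i => x (i, j)) (fun i => (π i : ℂ)) = 0 := by
        intro j
        have hw := hxperp (fun j' => if j' = j then 1 else 0)
        unfold piInnerKron at hw
        rw [Fintype.sum_prod_type_right] at hw
        unfold piInner
        calc ∑ i, (starRingEnd ℂ) ((π i : ℂ)) * x (i, j) / (π i : ℂ)
            = ∑ j' : Fin m, ∑ i, (starRingEnd ℂ) ((π i : ℂ) * (if j' = j then 1 else 0))
                * x (i, j') / (π i : ℂ) := by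
              rw [Finset.sum_comm]
              apply Finset.sum_congr rfl
              intro i _
              rw [Finset.sum_eq_single j]
              · simp
              · intro b _ hb
                simp [hb]
              · intro h
                exact absurd (Finset.mem_univ j) h
          _ = 0 := hw
      -- there is a nonzero column
      obtain ⟨p0, hp0⟩ := Function.ne_iff.1 hx0
      have hcol0 : (fun i => x (i, p0.2)) ≠ 0 := by
        intro h
        exact hp0 (by simpa using congrFun h p0.1)
      -- S2 is nonempty
      have hS2ne : S2.Nonempty := by
        refine ⟨piNorm π (Aᵀ *ᵥ fun i => x (i, p0.2)) / piNorm π (fun i => x (i, p0.2)),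
          ⟨_, hcol0, hcol p0.2, rfl⟩⟩
      set l := sSup S2 with hl
      have hl0 : 0 ≤ l := by
        obtain ⟨r0, hr0⟩ := hS2ne
        exact le_trans (hS2nn r0 hr0) (le_csSup hS2bdd hr0)
      -- per-column bound
      have hab : ∀ j : Fin m, ∑ i, ‖(Aᵀ *ᵥ (fun i' => x (i', j))) i‖ ^ 2 / π i
          ≤ l ^ 2 * ∑ i, ‖x (i, j)‖ ^ 2 / π i := by
        intro j
        by_cases hc : (fun i => x (i, j)) = 0
        · have h1 : ∀ i, x (i, j) = 0 := fun i => congrFun hc i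
          rw [show (fun i' => x (i', j)) = 0 from hc, Matrix.mulVec_zero]
          simp [h1]
        · have hmem : piNorm π (Aᵀ *ᵥ fun i' => x (i', j)) / piNorm π (fun i => x (i, j)) ∈ S2 :=
            ⟨_, hc, hcol j, rfl⟩
          have hle : piNorm π (Aᵀ *ᵥ fun i' => x (i', j)) / piNorm π (fun i => x (i, j)) ≤ l :=
            le_csSup hS2bdd hmem
          unfold piNorm at hle
          exact ratio_sq (Finset.sum_nonneg fun i _ => div_nonneg (sq_nonneg _) (hπpos i).le)
            (hposN _ hc) hle
      -- combine
      unfold piNormKron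
      have hfinal : ∑ p : Fin N × Fin m,
          ‖((A ⊗ₖ (1 : Matrix (Fin m) (Fin m) ℂ))ᵀ *ᵥ x) p‖ ^ 2 / π p.1
            ≤ l ^ 2 * ∑ p : Fin N × Fin m, ‖x p‖ ^ 2 / π p.1 := by
        rw [hnumdecomp, hdecomp, Finset.mul_sum]
        exact Finset.sum_le_sum fun j _ => hab j
      have := sqrt_div_le (sq_nonneg l)
        (Finset.sum_nonneg fun p _ => div_nonneg (sq_nonneg _) (hπpos p.1).le) hfinal
      rwa [Real.sqrt_sq hl0] at this
    · -- 0 ≤ sSup S2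
      rcases Set.eq_empty_or_nonempty S2 with h | ⟨r0, hr0⟩
      · rw [h, Real.sSup_empty]
      · exact le_trans (hS2nn r0 hr0) (le_csSup hS2bdd hr0)
  · -- sSup S2 ≤ sSup S1
    apply Real.sSup_le
    · intro r hr
      obtain ⟨x, hx0, hxorth, rfl⟩ := hr
      set j0 : Fin m := ⟨0, hm⟩ with hj0
      set y : Fin N × Fin m → ℂ := fun p => if p.2 = j0 then x p.1 else 0 with hy
      have hy0 : y ≠ 0 := by
        obtain ⟨i, hi⟩ := Function.ne_iff.1 hx0
        intro h
        apply hi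
        have := congrFun h (i, j0)
        simpa [hy] using this
      have hyperp : perpU π y := by
        intro w
        unfold piInnerKron
        rw [Fintype.sum_prod_type]
        have step : ∀ i : Fin N, ∑ j : Fin m,
            (starRingEnd ℂ) ((π i : ℂ) * w j) * y (i, j) / (π i : ℂ)
              = (starRingEnd ℂ) (w j0) * ((starRingEnd ℂ) ((π i : ℂ)) * x i / (π i : ℂ)) := by
          intro i
          rw [Finset.sum_eq_single j0]
          · simp only [hy, if_pos rfl]
            rw [_root_.map_mul]
            ring
          · intro j _ hj
            simp [hy, hj]
          · intro h
            exact absurd (Finset.mem_univ j0) h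
        rw [Finset.sum_congr rfl fun i _ => step i, ← Finset.mul_sum]
        unfold piInner at hxorth
        rw [hxorth, mul_zero]
      have hynorm : piNormKron π y = piNorm π x := by
        unfold piNormKron piNorm
        congr 1
        rw [Fintype.sum_prod_type]
        apply Finset.sum_congr rfl
        intro i _
        rw [Finset.sum_eq_single j0]
        · simp [hy]
        · intro j _ hj
          simp [hy, hj, (hπpos i).ne']
        · intro h
          exact absurd (Finset.mem_univ j0) h
      have hymul : ∀ p : Fin N × Fin m,
          ((A ⊗ₖ (1 : Matrix (Fin m) (Fin m) ℂ))ᵀ *ᵥ y) p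
            = if p.2 = j0 then (Aᵀ *ᵥ x) p.1 else 0 := by
        intro p
        rw [kron_mulVec]
        by_cases h : p.2 = j0
        · have hcx : (fun i => y (i, p.2)) = x := funext fun i => by simp [hy, h]
          rw [hcx, if_pos h]
        · have hcx : (fun i => y (i, p.2)) = 0 := funext fun i => by simp [hy, h]
          rw [hcx, Matrix.mulVec_zero, if_neg h]
          rfl
      have hynorm2 : piNormKron π ((A ⊗ₖ (1 : Matrix (Fin m) (Fin m) ℂ))ᵀ *ᵥ y)
          = piNorm π (Aᵀ *ᵥ x) := by
        unfold piNormKron piNorm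
        congr 1
        rw [Fintype.sum_prod_type]
        apply Finset.sum_congr rfl
        intro i _
        rw [Finset.sum_eq_single j0]
        · rw [hymul (i, j0)]
          simp
        · intro j _ hj
          rw [hymul (i, j)]
          simp [hj, (hπpos i).ne']
        · intro h
          exact absurd (Finset.mem_univ j0) h
      have hmem : piNorm π (Aᵀ *ᵥ x) / piNorm π x ∈ S1 := by
        refine ⟨y, hy0, hyperp, ?_⟩
        rw [hynorm, hynorm2]
      exact le_csSup hS1bdd hmem
    · rcases Set.eq_empty_or_nonempty S1 with h | ⟨r0, hr0⟩
      · rw [h, Real.sSup_empty]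
      · exact le_trans (hS1nn r0 hr0) (le_csSup hS1bdd hr0)
end

section
/- Let P be a regular Markov chain on state space [N] with stationary distribution π and spectral expansion λ, let m ≥ 1, let P̃ := P ⊗ I_m, and let U = {π ⊗ w : w ∈ ℂ^m} ⊆ ℂ^{Nm}. Then: (1) for every y ∈ U, P̃ᵀy = y; and (2) for every y ∈ ℂ^{Nm} that is π-orthogonal to U, the vector P̃ᵀy is also π-orthogonal to U and satisfies ‖P̃ᵀy‖_π ≤ λ‖y‖_π. -/
open scoped BigOperators Kronecker ComplexOrder
open Matrix

section Aux

variable {N : ℕ}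

private lemma piNorm_sq {π : Fin N → ℝ} (hπ : ∀ i, 0 < π i) (x : Fin N → ℂ) :
    (piNorm π x) ^ 2 = ∑ i, ‖x i‖ ^ 2 / π i := by
  rw [piNorm, Real.sq_sqrt]
  exact Finset.sum_nonneg fun i _ => div_nonneg (sq_nonneg _) (hπ i).le

private lemma entry_le {π : Fin N → ℝ} (hπ : ∀ i, 0 < π i) (hπ1 : ∀ i, π i ≤ 1)
    (x : Fin N → ℂ) (i : Fin N) : ‖x i‖ ≤ piNorm π x := by
  rw [piNorm, show ‖x i‖ = Real.sqrt (‖x i‖^2) by rw [Real.sqrt_sq (norm_nonneg _)]]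
  apply Real.sqrt_le_sqrt
  calc ‖x i‖^2 ≤ ‖x i‖^2 / π i := by
        rw [le_div_iff₀ (hπ i)]
        nlinarith [sq_nonneg ‖x i‖, hπ1 i, hπ i]
    _ ≤ ∑ j, ‖x j‖^2 / π j :=
        Finset.single_le_sum (f := fun j => ‖x j‖^2 / π j)
          (fun j _ => div_nonneg (sq_nonneg _) (hπ j).le) (Finset.mem_univ i)

private lemma trans_mulVec (A : Matrix (Fin N) (Fin N) ℂ) (x : Fin N → ℂ) (i : Fin N) :
    (Aᵀ *ᵥ x) i = ∑ j, A j i * x j := by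
  simp [mulVec, dotProduct, transpose_apply]

private lemma piNorm_pos {π : Fin N → ℝ} (hπ : ∀ i, 0 < π i) {x : Fin N → ℂ} (hx : x ≠ 0) :
    0 < piNorm π x := by
  obtain ⟨i, hi⟩ := Function.ne_iff.mp hx
  rw [piNorm, Real.sqrt_pos]
  apply Finset.sum_pos' (fun j _ => div_nonneg (sq_nonneg _) (hπ j).le)
  refine ⟨i, Finset.mem_univ i, div_pos ?_ (hπ i)⟩
  have : x i ≠ 0 := hi
  exact pow_pos (norm_pos_iff.mpr this) 2

private lemma mulVec_entry_le {P : Matrix (Fin N) (Fin N) ℝ} {π : Fin N → ℝ}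
    (hP : IsMarkov P) (hπ : ∀ i, 0 < π i) (hπ1 : ∀ i, π i ≤ 1)
    (x : Fin N → ℂ) (i : Fin N) :
    ‖((P.map Complex.ofReal)ᵀ *ᵥ x) i‖ ≤ N * piNorm π x := by
  rw [trans_mulVec]
  calc ‖∑ j, (P.map Complex.ofReal) j i * x j‖
      ≤ ∑ j, ‖(P.map Complex.ofReal) j i * x j‖ := norm_sum_le _ _
    _ ≤ ∑ j : Fin N, 1 * piNorm π x := by
        apply Finset.sum_le_sum
        intro j _
        rw [norm_mul]
        apply mul_le_mul ?_ (entry_le hπ hπ1 x j) (norm_nonneg _) zero_le_one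
        have h1 : P j i ≤ 1 := by
          calc P j i ≤ ∑ k, P j k :=
              Finset.single_le_sum (f := fun k => P j k)
                (fun k _ => hP.1 j k) (Finset.mem_univ i)
            _ = 1 := hP.2 j
        simp only [Matrix.map_apply, Complex.norm_real, Real.norm_eq_abs]
        rw [abs_of_nonneg (hP.1 j i)]
        exact h1
    _ = N * piNorm π x := by simp [Finset.sum_const]

private lemma piNorm_mulVec_le {P : Matrix (Fin N) (Fin N) ℝ} {π : Fin N → ℝ}
    (hP : IsMarkov P) (hπ : ∀ i, 0 < π i) (hπ1 : ∀ i, π i ≤ 1) (x : Fin N → ℂ) :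
    piNorm π ((P.map Complex.ofReal)ᵀ *ᵥ x) ≤
      (N * Real.sqrt (∑ i, 1 / π i)) * piNorm π x := by
  have h0 : 0 ≤ (N : ℝ) * piNorm π x :=
    mul_nonneg (Nat.cast_nonneg _) (Real.sqrt_nonneg _)
  calc piNorm π ((P.map Complex.ofReal)ᵀ *ᵥ x)
      ≤ Real.sqrt (∑ i, (N * piNorm π x)^2 / π i) := by
        apply Real.sqrt_le_sqrt
        apply Finset.sum_le_sum
        intro i _
        apply div_le_div_of_nonneg_right ?_ (hπ i).le
        exact pow_le_pow_left₀ (norm_nonneg _) (mulVec_entry_le hP hπ hπ1 x i) 2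
    _ = (N * Real.sqrt (∑ i, 1 / π i)) * piNorm π x := by
        rw [show (∑ i, (N * piNorm π x)^2 / π i) = (N * piNorm π x)^2 * ∑ i, 1 / π i by
          rw [Finset.mul_sum]; apply Finset.sum_congr rfl; intro i _; ring]
        rw [Real.sqrt_mul (sq_nonneg _), Real.sqrt_sq h0]
        ring

private lemma piInner_pi {π : Fin N → ℝ} (hπ : ∀ i, 0 < π i) (x : Fin N → ℂ) :
    piInner π x (fun i => (π i : ℂ)) = ∑ i, x i := by
  unfold piInner
  apply Finset.sum_congr rfl
  intro i _
  rw [Complex.conj_ofReal]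
  have : (π i : ℂ) ≠ 0 := Complex.ofReal_ne_zero.mpr (hπ i).ne'
  field_simp

private lemma specSet_bddAbove {P : Matrix (Fin N) (Fin N) ℝ} {π : Fin N → ℝ}
    (hP : IsMarkov P) (hπ : ∀ i, 0 < π i) (hπ1 : ∀ i, π i ≤ 1) :
    BddAbove {r : ℝ | ∃ x : Fin N → ℂ, x ≠ 0 ∧ piInner π x (fun i => (π i : ℂ)) = 0 ∧
      r = piNorm π ((P.map Complex.ofReal)ᵀ *ᵥ x) / piNorm π x} := by
  refine ⟨N * Real.sqrt (∑ i, 1 / π i), ?_⟩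
  rintro r ⟨x, hx0, _, rfl⟩
  rw [div_le_iff₀ (piNorm_pos hπ hx0)]
  exact piNorm_mulVec_le hP hπ hπ1 x

private lemma spec_slice {P : Matrix (Fin N) (Fin N) ℝ} {π : Fin N → ℝ}
    (hP : IsMarkov P) (hπ : ∀ i, 0 < π i) (hπ1 : ∀ i, π i ≤ 1)
    (x : Fin N → ℂ) (hx : ∑ i, x i = 0) :
    piNorm π ((P.map Complex.ofReal)ᵀ *ᵥ x) ≤ specExp P π * piNorm π x := by
  by_cases hx0 : x = 0
  · subst hx0
    simp only [Matrix.mulVec_zero]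
    have : piNorm π (0 : Fin N → ℂ) = 0 := by simp [piNorm]
    rw [this, mul_zero]
  · have hmem : piNorm π ((P.map Complex.ofReal)ᵀ *ᵥ x) / piNorm π x ∈
        {r : ℝ | ∃ x : Fin N → ℂ, x ≠ 0 ∧ piInner π x (fun i => (π i : ℂ)) = 0 ∧
          r = piNorm π ((P.map Complex.ofReal)ᵀ *ᵥ x) / piNorm π x} :=
      ⟨x, hx0, by rw [piInner_pi hπ]; exact hx, rfl⟩
    have hle := le_csSup (specSet_bddAbove hP hπ hπ1) hmem
    rw [specExp] at *
    rw [div_le_iff₀ (piNorm_pos hπ hx0)] at hle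
    exact hle

private lemma spec_nonneg {P : Matrix (Fin N) (Fin N) ℝ} {π : Fin N → ℝ}
    (hP : IsMarkov P) (hπ : ∀ i, 0 < π i) (hπ1 : ∀ i, π i ≤ 1)
    {x : Fin N → ℂ} (hx0 : x ≠ 0) (hx : ∑ i, x i = 0) :
    0 ≤ specExp P π := by
  have hmem : piNorm π ((P.map Complex.ofReal)ᵀ *ᵥ x) / piNorm π x ∈
      {r : ℝ | ∃ x : Fin N → ℂ, x ≠ 0 ∧ piInner π x (fun i => (π i : ℂ)) = 0 ∧
        r = piNorm π ((P.map Complex.ofReal)ᵀ *ᵥ x) / piNorm π x} :=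
    ⟨x, hx0, by rw [piInner_pi hπ]; exact hx, rfl⟩
  have hle := le_csSup (specSet_bddAbove hP hπ hπ1) hmem
  exact le_trans (div_nonneg (Real.sqrt_nonneg _) (Real.sqrt_nonneg _)) hle

private lemma kron_slice {m : ℕ} (A : Matrix (Fin N) (Fin N) ℂ) (y : Fin N × Fin m → ℂ)
    (p : Fin N × Fin m) :
    ((A ⊗ₖ (1 : Matrix (Fin m) (Fin m) ℂ))ᵀ *ᵥ y) p = ∑ j, A j p.1 * y (j, p.2) := by
  obtain ⟨i, a⟩ := p
  simp only [mulVec, dotProduct, transpose_apply, Fintype.sum_prod_type,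
    kroneckerMap_apply, Matrix.one_apply, mul_ite, mul_one, mul_zero, ite_mul, zero_mul]
  apply Finset.sum_congr rfl
  intro j _
  simp

private lemma piInnerKron_U {m : ℕ} {π : Fin N → ℝ} (hπ : ∀ i, 0 < π i)
    (x : Fin N × Fin m → ℂ) (w : Fin m → ℂ) :
    piInnerKron π x (fun p => (π p.1 : ℂ) * w p.2) =
      ∑ p, (starRingEnd ℂ) (w p.2) * x p := by
  unfold piInnerKron
  apply Finset.sum_congr rfl
  intro p _
  simp only [_root_.map_mul, Complex.conj_ofReal]
  have : (π p.1 : ℂ) ≠ 0 := Complex.ofReal_ne_zero.mpr (hπ p.1).ne'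
  field_simp

end Aux

theorem stmt_11 {N m : ℕ} (hm : 1 ≤ m)
    (P : Matrix (Fin N) (Fin N) ℝ) (π : Fin N → ℝ)
    (hP : IsMarkov P) (hreg : IsRegularMC P) (hπ : IsStationaryMC P π) :
    (∀ y : Fin N × Fin m → ℂ, memU π y →
      ((P.map Complex.ofReal) ⊗ₖ (1 : Matrix (Fin m) (Fin m) ℂ))ᵀ *ᵥ y = y) ∧
    (∀ y : Fin N × Fin m → ℂ, perpU π y →
      perpU π (((P.map Complex.ofReal) ⊗ₖ (1 : Matrix (Fin m) (Fin m) ℂ))ᵀ *ᵥ y) ∧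
      piNormKron π (((P.map Complex.ofReal) ⊗ₖ (1 : Matrix (Fin m) (Fin m) ℂ))ᵀ *ᵥ y) ≤
        specExp P π * piNormKron π y) := by
  have hπpos := hπ.1
  have hπ1 : ∀ i, π i ≤ 1 := by
    intro i
    calc π i ≤ ∑ j, π j :=
        Finset.single_le_sum (f := fun j => π j) (fun j _ => (hπpos j).le) (Finset.mem_univ i)
      _ = 1 := hπ.2.1
  set A := P.map Complex.ofReal with hA
  have station : ∀ i, ∑ j, (π j : ℂ) * (P j i : ℂ) = (π i : ℂ) := by
    intro i
    exact_mod_cast hπ.2.2 i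
  have rowsum : ∀ j, ∑ i, A j i = 1 := by
    intro j
    have := hP.2 j
    simp only [hA, Matrix.map_apply]
    exact_mod_cast this
  constructor
  · rintro y ⟨w, hw⟩
    funext p
    rw [kron_slice]
    have step : ∀ j, A j p.1 * y (j, p.2) = ((π j : ℂ) * (P j p.1 : ℂ)) * w p.2 := by
      intro j
      rw [hw (j, p.2)]
      simp only [hA, Matrix.map_apply]
      ring
    rw [Finset.sum_congr rfl (fun j _ => step j), ← Finset.sum_mul, station, hw p]
  · intro y hy
    have hy' : ∀ w : Fin m → ℂ, ∑ p, (starRingEnd ℂ) (w p.2) * y p = 0 := by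
      intro w
      have := hy w
      rwa [piInnerKron_U hπpos] at this
    have hperp : perpU π ((A ⊗ₖ (1 : Matrix (Fin m) (Fin m) ℂ))ᵀ *ᵥ y) := by
      intro w
      rw [piInnerKron_U hπpos]
      calc ∑ p, (starRingEnd ℂ) (w p.2) * ((A ⊗ₖ (1 : Matrix (Fin m) (Fin m) ℂ))ᵀ *ᵥ y) p
          = ∑ p : Fin N × Fin m, ∑ j, (starRingEnd ℂ) (w p.2) * (A j p.1 * y (j, p.2)) := by
            refine Finset.sum_congr rfl fun p _ => ?_
            rw [kron_slice, Finset.mul_sum]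
        _ = ∑ j, ∑ p : Fin N × Fin m, (starRingEnd ℂ) (w p.2) * (A j p.1 * y (j, p.2)) :=
            Finset.sum_comm
        _ = ∑ j, ∑ i, ∑ a, (starRingEnd ℂ) (w a) * (A j i * y (j, a)) := by
            refine Finset.sum_congr rfl fun j _ => ?_
            rw [Fintype.sum_prod_type]
        _ = ∑ j, ∑ a, ∑ i, (starRingEnd ℂ) (w a) * (A j i * y (j, a)) := by
            refine Finset.sum_congr rfl fun j _ => ?_
            exact Finset.sum_comm
        _ = ∑ j, ∑ a, ((starRingEnd ℂ) (w a) * y (j, a)) * (∑ i, A j i) := by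
            refine Finset.sum_congr rfl fun j _ => Finset.sum_congr rfl fun a _ => ?_
            rw [Finset.mul_sum]
            refine Finset.sum_congr rfl fun i _ => ?_
            ring
        _ = ∑ j, ∑ a, (starRingEnd ℂ) (w a) * y (j, a) := by
            refine Finset.sum_congr rfl fun j _ => Finset.sum_congr rfl fun a _ => ?_
            rw [rowsum j, mul_one]
        _ = ∑ p : Fin N × Fin m, (starRingEnd ℂ) (w p.2) * y p :=
            (Fintype.sum_prod_type (fun p : Fin N × Fin m => (starRingEnd ℂ) (w p.2) * y p)).symm
        _ = 0 := hy' w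
    refine ⟨hperp, ?_⟩
    by_cases hy0 : y = 0
    · subst hy0
      have hz : piNormKron π (0 : Fin N × Fin m → ℂ) = 0 := by simp [piNormKron]
      rw [Matrix.mulVec_zero, hz, mul_zero]
    · have hslice0 : ∀ a, ∑ j, y (j, a) = 0 := by
        intro a
        have h := hy' (fun b => if b = a then 1 else 0)
        rw [Fintype.sum_prod_type_right] at h
        simpa using h
      obtain ⟨p0, hp0⟩ := Function.ne_iff.mp hy0
      have hx0 : (fun j => y (j, p0.2)) ≠ 0 := by
        intro hc
        exact hp0 (by have := congrFun hc p0.1; simpa using this)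
      have hspec0 : 0 ≤ specExp P π := spec_nonneg hP hπpos hπ1 hx0 (hslice0 p0.2)
      have key : ∀ a : Fin m,
          ∑ i, ‖((A ⊗ₖ (1 : Matrix (Fin m) (Fin m) ℂ))ᵀ *ᵥ y) (i, a)‖ ^ 2 / π i ≤
            (specExp P π) ^ 2 * ∑ i, ‖y (i, a)‖ ^ 2 / π i := by
        intro a
        have hid : ∀ i, ((A ⊗ₖ (1 : Matrix (Fin m) (Fin m) ℂ))ᵀ *ᵥ y) (i, a) =
            (Aᵀ *ᵥ fun j => y (j, a)) i := by
          intro i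
          rw [kron_slice, trans_mulVec]
        have hle := spec_slice hP hπpos hπ1 (fun j => y (j, a)) (hslice0 a)
        calc ∑ i, ‖((A ⊗ₖ (1 : Matrix (Fin m) (Fin m) ℂ))ᵀ *ᵥ y) (i, a)‖ ^ 2 / π i
            = ∑ i, ‖(Aᵀ *ᵥ fun j => y (j, a)) i‖ ^ 2 / π i := by
              refine Finset.sum_congr rfl fun i _ => ?_
              rw [hid i]
          _ = (piNorm π (Aᵀ *ᵥ fun j => y (j, a))) ^ 2 := (piNorm_sq hπpos _).symm
          _ ≤ (specExp P π * piNorm π fun j => y (j, a)) ^ 2 :=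
              pow_le_pow_left₀ (Real.sqrt_nonneg _) hle 2
          _ = (specExp P π) ^ 2 * (piNorm π fun j => y (j, a)) ^ 2 := mul_pow _ _ 2
          _ = (specExp P π) ^ 2 * ∑ i, ‖y (i, a)‖ ^ 2 / π i := by rw [piNorm_sq hπpos]
      have hsum : ∑ p, ‖((A ⊗ₖ (1 : Matrix (Fin m) (Fin m) ℂ))ᵀ *ᵥ y) p‖ ^ 2 / π p.1 ≤
          (specExp P π) ^ 2 * ∑ p, ‖y p‖ ^ 2 / π p.1 := by
        rw [Fintype.sum_prod_type_right, Fintype.sum_prod_type_right, Finset.mul_sum]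
        exact Finset.sum_le_sum fun a _ => key a
      calc piNormKron π ((A ⊗ₖ (1 : Matrix (Fin m) (Fin m) ℂ))ᵀ *ᵥ y)
          ≤ Real.sqrt ((specExp P π) ^ 2 * ∑ p, ‖y p‖ ^ 2 / π p.1) :=
            Real.sqrt_le_sqrt hsum
        _ = specExp P π * piNormKron π y := by
            rw [Real.sqrt_mul (sq_nonneg _), Real.sqrt_sq hspec0, piNormKron]
end

section
/- Let P be a regular Markov chain on state space [N] with stationary distribution π. Let m ≥ 1, ℓ ≥ 0, t > 0, and let H_1,…,H_N ∈ ℂ^{m×m} satisfy ‖H_i‖₂ ≤ ℓ for all i and Σ_{i∈[N]} π_i H_i = 0. Let E ∈ ℂ^{Nm×Nm} be the block-diagonal matrix with i-th diagonal block exp(tH_i), and let P̃ := P ⊗ I_m. Then for every z ∈ ℂ^{Nm}, ‖( P̃ᵀ E* z^∥ )^∥‖_π ≤ (exp(tℓ) − tℓ)·‖z^∥‖_π. -/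
open scoped BigOperators Kronecker ComplexOrder
open Matrix

/-- The matrix exponential, `exp A = ∑ A^k / k!`. -/
noncomputable def mexp {m : Type*} [Fintype m] [DecidableEq m]
    (A : Matrix m m ℂ) : Matrix m m ℂ :=
  ∑' k : ℕ, ((k.factorial : ℂ)⁻¹) • A ^ k

/-- The block-diagonal matrix `diag (M 1, …, M N)`. -/
def blockDiag' {S m : Type*} [DecidableEq S] (M : S → Matrix m m ℂ) :
    Matrix (S × m) (S × m) ℂ :=
  Matrix.of fun p q => if p.1 = q.1 then M p.1 p.2 q.2 else 0

/-! ### Auxiliary lemmas -/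

section Aux

lemma mexp_eq_exp {m : Type*} [Fintype m] [DecidableEq m] (A : Matrix m m ℂ) :
    mexp A = NormedSpace.exp A := by
  rw [NormedSpace.exp_eq_tsum ℂ]; rfl

open scoped Matrix.Norms.L2Operator

variable {m : ℕ}

lemma aux_mulVec_norm (A : Matrix (Fin m) (Fin m) ℂ) (x : Fin m → ℂ) :
    Real.sqrt (∑ i, ‖(A *ᵥ x) i‖ ^ 2) ≤ ‖A‖ * Real.sqrt (∑ i, ‖x i‖ ^ 2) := by
  have h := Matrix.l2_opNorm_mulVec A ((WithLp.equiv 2 (Fin m → ℂ)).symm x)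
  simpa [EuclideanSpace.norm_eq] using h

lemma aux_opNorm_le {A : Matrix (Fin m) (Fin m) ℂ} {c : ℝ} (hc : 0 ≤ c)
    (h : ∀ x : Fin m → ℂ,
      Real.sqrt (∑ i, ‖(A *ᵥ x) i‖ ^ 2) ≤ c * Real.sqrt (∑ i, ‖x i‖ ^ 2)) : ‖A‖ ≤ c := by
  rw [Matrix.l2_opNorm_def]
  refine ContinuousLinearMap.opNorm_le_bound _ hc fun x => ?_
  have := h ((WithLp.equiv 2 (Fin m → ℂ)) x)
  simpa [EuclideanSpace.norm_eq, Matrix.toEuclideanLin_apply] using this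

lemma norm_le_of_spectralNorm_le {A : Matrix (Fin m) (Fin m) ℂ} {c : ℝ} (hc : 0 ≤ c)
    (h : matSpectralNorm A ≤ c) : ‖A‖ ≤ c := by
  refine aux_opNorm_le hc fun x => ?_
  rcases eq_or_ne x 0 with rfl | hx
  · simp [Matrix.mulVec_zero]
  · have hxpos : 0 < Real.sqrt (∑ i, ‖x i‖ ^ 2) := by
      have : 0 < ∑ i, ‖x i‖ ^ 2 := by
        have hne : ∃ i, x i ≠ 0 := by
          by_contra hco
          push_neg at hco
          exact hx (funext fun i => hco i)
        obtain ⟨i, hi⟩ := hne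
        refine Finset.sum_pos' (fun j _ => by positivity) ⟨i, Finset.mem_univ i, by
            have : 0 < ‖x i‖ := norm_pos_iff.mpr hi
            positivity⟩
      positivity
    have hmem : Real.sqrt (∑ i, ‖(A *ᵥ x) i‖ ^ 2) / Real.sqrt (∑ i, ‖x i‖ ^ 2) ∈
        {r : ℝ | ∃ y : Fin m → ℂ, y ≠ 0 ∧
          r = Real.sqrt (∑ i, ‖(A *ᵥ y) i‖ ^ 2) / Real.sqrt (∑ j, ‖y j‖ ^ 2)} := ⟨x, hx, rfl⟩
    have hbdd : BddAbove {r : ℝ | ∃ y : Fin m → ℂ, y ≠ 0 ∧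
        r = Real.sqrt (∑ i, ‖(A *ᵥ y) i‖ ^ 2) / Real.sqrt (∑ j, ‖y j‖ ^ 2)} := by
      refine ⟨‖A‖, fun r hr => ?_⟩
      obtain ⟨y, hy, rfl⟩ := hr
      rcases eq_or_lt_of_le (Real.sqrt_nonneg (∑ j, ‖y j‖ ^ 2)) with h0 | h0
      · rw [← h0, div_zero]
        exact norm_nonneg A
      · rw [div_le_iff₀ h0]
        exact aux_mulVec_norm A y
    have hle := le_csSup hbdd hmem
    have h2 : Real.sqrt (∑ i, ‖(A *ᵥ x) i‖ ^ 2) / Real.sqrt (∑ i, ‖x i‖ ^ 2) ≤ c :=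
      le_trans hle h
    calc Real.sqrt (∑ i, ‖(A *ᵥ x) i‖ ^ 2)
        = (Real.sqrt (∑ i, ‖(A *ᵥ x) i‖ ^ 2) / Real.sqrt (∑ i, ‖x i‖ ^ 2)) *
          Real.sqrt (∑ i, ‖x i‖ ^ 2) := by
            rw [div_mul_cancel₀ _ (ne_of_gt hxpos)]
      _ ≤ c * Real.sqrt (∑ i, ‖x i‖ ^ 2) := mul_le_mul_of_nonneg_right h2 (le_of_lt hxpos)

lemma real_exp_remainder_hasSum {c : ℝ} :
    HasSum (fun n : ℕ => c ^ (n + 2) / (n + 2).factorial) (Real.exp c - (1 + c)) := by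
  have h : HasSum (fun n : ℕ => ((n.factorial : ℝ))⁻¹ • c ^ n) (NormedSpace.exp c) :=
    NormedSpace.exp_series_hasSum_exp' c
  have h2 := (hasSum_nat_add_iff' 2).mpr h
  simp only [Finset.sum_range_succ, Finset.sum_range_zero] at h2
  rw [Real.exp_eq_exp_ℝ]
  convert h2 using 2 with n
  · rfl
  · rw [smul_eq_mul, div_eq_inv_mul]
  · norm_num [Nat.factorial]

lemma exp_remainder_norm_le {B : Matrix (Fin m) (Fin m) ℂ} {c : ℝ}
    (hB : ‖B‖ ≤ c) : ‖NormedSpace.exp B - 1 - B‖ ≤ Real.exp c - 1 - c := by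
  have h : HasSum (fun n : ℕ => ((n.factorial : ℂ))⁻¹ • B ^ n) (NormedSpace.exp B) :=
    NormedSpace.exp_series_hasSum_exp' B
  have h2 := (hasSum_nat_add_iff' 2).mpr h
  simp only [Finset.sum_range_succ, Finset.sum_range_zero, Nat.factorial_zero,
    Nat.factorial_one, Nat.cast_one, inv_one, pow_zero, pow_one, one_smul, zero_add] at h2
  have heq : NormedSpace.exp B - 1 - B
      = ∑' n : ℕ, ((((n + 2)).factorial : ℂ))⁻¹ • B ^ (n + 2) := by
    rw [h2.tsum_eq]; abel
  rw [heq]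
  have hbound : ∀ n : ℕ, ‖((((n + 2)).factorial : ℂ))⁻¹ • B ^ (n + 2)‖ ≤
      c ^ (n + 2) / (n + 2).factorial := by
    intro n
    rw [norm_smul, norm_inv, Complex.norm_natCast, div_eq_inv_mul]
    refine mul_le_mul_of_nonneg_left ?_ (by positivity)
    calc ‖B ^ (n + 2)‖ ≤ ‖B‖ ^ (n + 2) := norm_pow_le' B (Nat.succ_pos _)
      _ ≤ c ^ (n + 2) := pow_le_pow_left₀ (norm_nonneg B) hB _
  have hfin := tsum_of_norm_bounded real_exp_remainder_hasSum hbound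
  calc ‖∑' n : ℕ, ((((n + 2)).factorial : ℂ))⁻¹ • B ^ (n + 2)‖
      ≤ Real.exp c - (1 + c) := hfin
    _ = Real.exp c - 1 - c := by ring

lemma one_norm_le : ‖(1 : Matrix (Fin m) (Fin m) ℂ)‖ ≤ 1 := by
  rw [Matrix.l2_opNorm_def]
  refine ContinuousLinearMap.opNorm_le_bound _ zero_le_one fun x => ?_
  rw [one_mul]
  apply le_of_eq
  congr 1
  ext i
  simp [Matrix.toEuclideanLin_apply, Matrix.one_mulVec]

lemma M_norm_le {N : ℕ} (π : Fin N → ℝ) (hπ0 : ∀ i, 0 ≤ π i) (hπ1 : ∑ i, π i = 1)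
    (H : Fin N → Matrix (Fin m) (Fin m) ℂ) (t ℓ : ℝ) (ht : 0 ≤ t) (hℓ : 0 ≤ ℓ)
    (hH : ∀ i, ‖H i‖ ≤ ℓ) (hmean : ∑ i, π i • H i = 0) :
    ‖∑ i, (π i : ℂ) • NormedSpace.exp (((t : ℂ) • H i)ᴴ)‖ ≤ Real.exp (t * ℓ) - t * ℓ := by
  set B : Fin N → Matrix (Fin m) (Fin m) ℂ := fun i => ((t : ℂ) • H i)ᴴ with hBdef
  have hB : ∀ i, ‖B i‖ ≤ t * ℓ := by
    intro i
    rw [hBdef, Matrix.l2_opNorm_conjTranspose, norm_smul, Complex.norm_real,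
      Real.norm_eq_abs, abs_of_nonneg ht]
    exact mul_le_mul_of_nonneg_left (hH i) ht
  have hsum1 : ∑ i, (π i : ℂ) • (1 : Matrix (Fin m) (Fin m) ℂ) = 1 := by
    rw [← Finset.sum_smul]
    norm_cast
    rw [hπ1, one_smul]
  have hsumB : ∑ i, (π i : ℂ) • B i = 0 := by
    have h1 : ∀ i, (π i : ℂ) • B i = ((t : ℂ) • ((π i : ℂ) • H i))ᴴ := by
      intro i
      ext a b
      simp only [hBdef, Matrix.smul_apply, Matrix.conjTranspose_apply, smul_eq_mul,
        star_mul', Complex.star_def, Complex.conj_ofReal]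
      ring
    have h2 : ∀ i, (π i : ℂ) • H i = π i • H i := by
      intro i
      ext a b
      simp [Matrix.smul_apply, Complex.real_smul]
    simp_rw [h1, ← Matrix.conjTranspose_sum, ← Finset.smul_sum, h2, hmean, smul_zero,
      Matrix.conjTranspose_zero]
  have hdecomp : ∑ i, (π i : ℂ) • NormedSpace.exp (B i) =
      1 + ∑ i, (π i : ℂ) • (NormedSpace.exp (B i) - 1 - B i) := by
    have hsplit : ∀ i, NormedSpace.exp (B i) =
        (NormedSpace.exp (B i) - 1 - B i) + 1 + B i := by intro i; abel
    calc ∑ i, (π i : ℂ) • NormedSpace.exp (B i)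
        = ∑ i, ((π i : ℂ) • (NormedSpace.exp (B i) - 1 - B i) +
            (π i : ℂ) • (1 : Matrix (Fin m) (Fin m) ℂ) + (π i : ℂ) • B i) := by
          refine Finset.sum_congr rfl fun i _ => ?_
          rw [← smul_add, ← smul_add, ← hsplit i]
      _ = ∑ i, (π i : ℂ) • (NormedSpace.exp (B i) - 1 - B i) +
          ∑ i, (π i : ℂ) • (1 : Matrix (Fin m) (Fin m) ℂ) + ∑ i, (π i : ℂ) • B i := by
          rw [Finset.sum_add_distrib, Finset.sum_add_distrib]
      _ = 1 + ∑ i, (π i : ℂ) • (NormedSpace.exp (B i) - 1 - B i) := by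
          rw [hsum1, hsumB]; abel
  rw [hdecomp]
  have hRsum : ‖∑ i, (π i : ℂ) • (NormedSpace.exp (B i) - 1 - B i)‖ ≤
      Real.exp (t * ℓ) - 1 - t * ℓ := by
    calc ‖∑ i, (π i : ℂ) • (NormedSpace.exp (B i) - 1 - B i)‖
        ≤ ∑ i, ‖(π i : ℂ) • (NormedSpace.exp (B i) - 1 - B i)‖ := norm_sum_le _ _
      _ ≤ ∑ i, π i * (Real.exp (t * ℓ) - 1 - t * ℓ) := by
          refine Finset.sum_le_sum fun i _ => ?_
          rw [norm_smul, Complex.norm_real, Real.norm_eq_abs, abs_of_nonneg (hπ0 i)]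
          exact mul_le_mul_of_nonneg_left (exp_remainder_norm_le (hB i)) (hπ0 i)
      _ = Real.exp (t * ℓ) - 1 - t * ℓ := by rw [← Finset.sum_mul, hπ1, one_mul]
  calc ‖1 + ∑ i, (π i : ℂ) • (NormedSpace.exp (B i) - 1 - B i)‖
      ≤ ‖(1 : Matrix (Fin m) (Fin m) ℂ)‖ +
        ‖∑ i, (π i : ℂ) • (NormedSpace.exp (B i) - 1 - B i)‖ := norm_add_le _ _
    _ ≤ 1 + (Real.exp (t * ℓ) - 1 - t * ℓ) := add_le_add one_norm_le hRsum
    _ = Real.exp (t * ℓ) - t * ℓ := by ring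

end Aux

open scoped Matrix.Norms.L2Operator

theorem stmt_12 {N m : ℕ} (hm : 1 ≤ m)
    (P : Matrix (Fin N) (Fin N) ℝ) (π : Fin N → ℝ)
    (hP : IsMarkov P) (hreg : IsRegularMC P) (hπ : IsStationaryMC P π)
    (ℓ t : ℝ) (hℓ : 0 ≤ ℓ) (ht : 0 < t)
    (H : Fin N → Matrix (Fin m) (Fin m) ℂ)
    (hH : ∀ i, matSpectralNorm (H i) ≤ ℓ)
    (hmean : ∑ i, π i • H i = 0)
    (z zpar zperp : Fin N × Fin m → ℂ)
    (hdecz : z = zpar + zperp) (hzpar : memU π zpar) (hzperp : perpU π zperp)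
    (y ypar yperp : Fin N × Fin m → ℂ)
    (hy : y = ((P.map Complex.ofReal) ⊗ₖ (1 : Matrix (Fin m) (Fin m) ℂ))ᵀ *ᵥ
      ((blockDiag' fun i => mexp ((t : ℂ) • H i))ᴴ *ᵥ zpar))
    (hdecy : y = ypar + yperp) (hypar : memU π ypar) (hyperp : perpU π yperp) :
    piNormKron π ypar ≤ (Real.exp (t * ℓ) - t * ℓ) * piNormKron π zpar := by
  
  classical
  obtain ⟨w, hw⟩ := hzpar
  obtain ⟨u, hu⟩ := hypar
  have hπpos : ∀ i, 0 < π i := hπ.1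
  have hπ1 : ∑ i, π i = 1 := hπ.2.1
  have hrow : ∀ i, ∑ j, P i j = 1 := hP.2
  have hπne : ∀ i, ((π i : ℝ) : ℂ) ≠ 0 := fun i => by
    exact_mod_cast Complex.ofReal_ne_zero.mpr (ne_of_gt (hπpos i))
  set E' : Fin N → Matrix (Fin m) (Fin m) ℂ := fun i => mexp ((t : ℂ) • H i) with hE'
  set M : Matrix (Fin m) (Fin m) ℂ :=
    ∑ i, (π i : ℂ) • NormedSpace.exp (((t : ℂ) • H i)ᴴ) with hM
  -- entries of M
  have hMapp : ∀ a c, M a c = ∑ i, (π i : ℂ) * (starRingEnd ℂ) (E' i c a) := by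
    intro a c
    rw [hM, Matrix.sum_apply]
    refine Finset.sum_congr rfl fun i _ => ?_
    rw [Matrix.exp_conjTranspose, ← mexp_eq_exp]
    simp [Matrix.smul_apply, Matrix.conjTranspose_apply, hE', Complex.star_def]
  -- the vector v
  set v : Fin N × Fin m → ℂ := (blockDiag' fun i => mexp ((t : ℂ) • H i))ᴴ *ᵥ zpar with hv
  have hvapp : ∀ i b, v (i, b) = (π i : ℂ) * ∑ c, (starRingEnd ℂ) (E' i c b) * w c := by
    intro i b
    rw [hv]
    show (∑ q, (_root_.blockDiag' fun i => mexp ((t : ℂ) • H i))ᴴ (i, b) q * zpar q) = _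
    rw [Fintype.sum_prod_type]
    have hterm : ∀ (i' : Fin N) (c : Fin m),
        (_root_.blockDiag' fun i => mexp ((t : ℂ) • H i))ᴴ (i, b) (i', c) * zpar (i', c)
        = if i' = i then (starRingEnd ℂ) (E' i c b) * ((π i : ℂ) * w c) else 0 := by
      intro i' c
      rw [Matrix.conjTranspose_apply, hw (i', c)]
      simp only [_root_.blockDiag', Matrix.of_apply]
      by_cases h : i' = i
      · subst h; simp [hE']
      · simp [h]
    simp only [hterm]
    rw [Finset.sum_comm]
    simp only [Finset.sum_ite_eq', Finset.mem_univ, if_true]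
    rw [Finset.mul_sum]
    refine Finset.sum_congr rfl fun c _ => by ring
  -- entries of y
  have hyapp : ∀ j a, y (j, a) = ∑ i, ((P i j : ℝ) : ℂ) * v (i, a) := by
    intro j a
    rw [hy]
    show (∑ q, ((P.map Complex.ofReal) ⊗ₖ (1 : Matrix (Fin m) (Fin m) ℂ))ᵀ (j, a) q * v q) = _
    rw [Fintype.sum_prod_type]
    refine Finset.sum_congr rfl fun i _ => ?_
    have hterm : ∀ b : Fin m,
        ((P.map Complex.ofReal) ⊗ₖ (1 : Matrix (Fin m) (Fin m) ℂ))ᵀ (j, a) (i, b) * v (i, b)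
        = if b = a then ((P i j : ℝ) : ℂ) * v (i, a) else 0 := by
      intro b
      rw [Matrix.transpose_apply, Matrix.kroneckerMap_apply]
      by_cases h : b = a
      · subst h; simp [Matrix.one_apply, Matrix.map_apply]
      · simp [Matrix.one_apply, Ne.symm h, h]
    simp only [hterm, Finset.sum_ite_eq', Finset.mem_univ, if_true]
  -- column sums of yperp vanish
  have hyperp_sum : ∀ a, ∑ j, yperp (j, a) = 0 := by
    intro a
    have h0 := hyperp (fun b => if b = a then 1 else 0)
    rw [piInnerKron, Fintype.sum_prod_type] at h0
    have hterm : ∀ (j : Fin N) (b : Fin m),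
        (starRingEnd ℂ) ((π j : ℂ) * if b = a then 1 else 0) * yperp (j, b) / (π j : ℂ)
        = if b = a then yperp (j, b) else 0 := by
      intro j b
      by_cases h : b = a
      · subst h
        simp only [if_true, mul_one, Complex.conj_ofReal]
        rw [mul_comm, mul_div_assoc, div_self (hπne j), mul_one]
      · simp [h]
    simp only [hterm, Finset.sum_ite_eq', Finset.mem_univ, if_true] at h0
    exact h0
  -- identify u with M *ᵥ w
  have hkey : ∀ a, u a = (M *ᵥ w) a := by
    intro a
    have h1 : ∑ j, ypar (j, a) = u a := by
      simp only [hu]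
      rw [← Finset.sum_mul]
      norm_cast
      rw [hπ1]
      norm_num
    have h2 : ∑ j, y (j, a) = u a := by
      have := hyperp_sum a
      calc ∑ j, y (j, a) = ∑ j, (ypar (j, a) + yperp (j, a)) := by
            refine Finset.sum_congr rfl fun j _ => ?_
            rw [hdecy]; rfl
        _ = ∑ j, ypar (j, a) + ∑ j, yperp (j, a) := Finset.sum_add_distrib
        _ = u a := by rw [h1, this, add_zero]
    have h3 : ∑ j, y (j, a) = (M *ᵥ w) a := by
      simp only [hyapp]
      rw [Finset.sum_comm]
      have hPsum : ∀ i : Fin N, ∑ j, ((P i j : ℝ) : ℂ) = 1 := by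
        intro i
        norm_cast
        exact_mod_cast hrow i
      calc ∑ i, ∑ j, ((P i j : ℝ) : ℂ) * v (i, a)
          = ∑ i, (∑ j, ((P i j : ℝ) : ℂ)) * v (i, a) := by
            refine Finset.sum_congr rfl fun i _ => (Finset.sum_mul _ _ _).symm
        _ = ∑ i, v (i, a) := by
            refine Finset.sum_congr rfl fun i _ => by rw [hPsum i, one_mul]
        _ = ∑ i, (π i : ℂ) * ∑ c, (starRingEnd ℂ) (E' i c a) * w c := by
            refine Finset.sum_congr rfl fun i _ => hvapp i a
        _ = ∑ c, (∑ i, (π i : ℂ) * (starRingEnd ℂ) (E' i c a)) * w c := by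
            simp_rw [Finset.mul_sum, Finset.sum_mul]
            rw [Finset.sum_comm]
            exact Finset.sum_congr rfl fun i _ => Finset.sum_congr rfl fun c _ => by ring
        _ = (M *ᵥ w) a := by
            show _ = ∑ c, M a c * w c
            refine (Finset.sum_congr rfl fun c _ => ?_).symm
            rw [hMapp a c]
    rw [← h2, h3]
  -- norms
  have hnypar : piNormKron π ypar = Real.sqrt (∑ a, ‖u a‖ ^ 2) := by
    rw [piNormKron]
    congr 1
    rw [Fintype.sum_prod_type]
    calc ∑ j, ∑ a, ‖ypar (j, a)‖ ^ 2 / π j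
        = ∑ j, ∑ a, π j * ‖u a‖ ^ 2 := by
          refine Finset.sum_congr rfl fun j _ => Finset.sum_congr rfl fun a _ => ?_
          have hne := ne_of_gt (hπpos j)
          rw [hu (j, a), norm_mul, Complex.norm_real, Real.norm_eq_abs,
            abs_of_nonneg (le_of_lt (hπpos j)), mul_pow]
          field_simp
      _ = ∑ a, ‖u a‖ ^ 2 := by
          simp_rw [← Finset.mul_sum]
          rw [← Finset.sum_mul, hπ1, one_mul]
  have hnzpar : piNormKron π zpar = Real.sqrt (∑ c, ‖w c‖ ^ 2) := by
    rw [piNormKron]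
    congr 1
    rw [Fintype.sum_prod_type]
    calc ∑ j, ∑ a, ‖zpar (j, a)‖ ^ 2 / π j
        = ∑ j, ∑ a, π j * ‖w a‖ ^ 2 := by
          refine Finset.sum_congr rfl fun j _ => Finset.sum_congr rfl fun a _ => ?_
          have hne := ne_of_gt (hπpos j)
          rw [hw (j, a), norm_mul, Complex.norm_real, Real.norm_eq_abs,
            abs_of_nonneg (le_of_lt (hπpos j)), mul_pow]
          field_simp
      _ = ∑ a, ‖w a‖ ^ 2 := by
          simp_rw [← Finset.mul_sum]
          rw [← Finset.sum_mul, hπ1, one_mul]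
  -- final chain
  have hMnorm : ‖M‖ ≤ Real.exp (t * ℓ) - t * ℓ :=
    M_norm_le π (fun i => le_of_lt (hπpos i)) hπ1 H t ℓ (le_of_lt ht) hℓ
      (fun i => norm_le_of_spectralNorm_le hℓ (hH i)) hmean
  calc piNormKron π ypar = Real.sqrt (∑ a, ‖(M *ᵥ w) a‖ ^ 2) := by
        rw [hnypar]
        congr 1
        exact Finset.sum_congr rfl fun a _ => by rw [hkey a]
    _ ≤ ‖M‖ * Real.sqrt (∑ c, ‖w c‖ ^ 2) := aux_mulVec_norm M w
    _ ≤ (Real.exp (t * ℓ) - t * ℓ) * Real.sqrt (∑ c, ‖w c‖ ^ 2) :=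
        mul_le_mul_of_nonneg_right hMnorm (Real.sqrt_nonneg _)
    _ = (Real.exp (t * ℓ) - t * ℓ) * piNormKron π zpar := by rw [hnzpar]
end

section
/- Let P be a regular Markov chain on state space [N] with stationary distribution π. Let m ≥ 1, ℓ ≥ 0, t > 0, and let H_1,…,H_N ∈ ℂ^{m×m} satisfy ‖H_i‖₂ ≤ ℓ for all i and Σ_{i∈[N]} π_i H_i = 0. Let E ∈ ℂ^{Nm×Nm} be the block-diagonal matrix with i-th diagonal block exp(tH_i), and let P̃ := P ⊗ I_m. Then for every z ∈ ℂ^{Nm}, ‖( P̃ᵀ E* z^⊥ )^∥‖_π ≤ (exp(tℓ) − 1)·‖z^⊥‖_π. -/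
open scoped BigOperators Kronecker ComplexOrder
open Matrix

/-- The spectral (operator 2-)norm of a matrix. -/
noncomputable def spectralNormM {𝕜 : Type*} [RCLike 𝕜] {m n : Type*} [Fintype m] [Fintype n]
    (A : Matrix m n 𝕜) : ℝ :=
  sSup {r : ℝ | ∃ x : n → 𝕜, x ≠ 0 ∧
    r = Real.sqrt (∑ i, ‖(A *ᵥ x) i‖ ^ 2) / Real.sqrt (∑ j, ‖x j‖ ^ 2)}

section auxSpec

open NormedSpace

variable {m : ℕ}

noncomputable def auxTE (A : Matrix (Fin m) (Fin m) ℂ) :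
    EuclideanSpace ℂ (Fin m) →L[ℂ] EuclideanSpace ℂ (Fin m) :=
  Matrix.toEuclideanCLM (𝕜 := ℂ) A

lemma aux_en_symm (v : Fin m → ℂ) :
    ‖(WithLp.equiv 2 (Fin m → ℂ)).symm v‖ = Real.sqrt (∑ i, ‖v i‖ ^ 2) := by
  rw [EuclideanSpace.norm_eq]
  simp [WithLp.equiv_symm_apply]

lemma auxTE_apply (A : Matrix (Fin m) (Fin m) ℂ) (v : Fin m → ℂ) :
    auxTE A ((WithLp.equiv 2 (Fin m → ℂ)).symm v) =
      (WithLp.equiv 2 (Fin m → ℂ)).symm (A *ᵥ v) := by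
  rw [auxTE, WithLp.equiv_symm_apply, Matrix.toEuclideanCLM_toLp]

lemma aux_en_pos {v : Fin m → ℂ} (hv : v ≠ 0) : 0 < Real.sqrt (∑ i, ‖v i‖ ^ 2) := by
  apply Real.sqrt_pos.2
  obtain ⟨i, hi⟩ := Function.ne_iff.1 hv
  exact Finset.sum_pos' (fun j _ => by positivity)
    ⟨i, Finset.mem_univ i, by simpa using pow_pos (norm_pos_iff.2 hi) 2⟩

lemma aux_mem_specSet_le (A : Matrix (Fin m) (Fin m) ℂ) {r : ℝ}
    (hr : r ∈ {r : ℝ | ∃ x : Fin m → ℂ, x ≠ 0 ∧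
      r = Real.sqrt (∑ i, ‖(A *ᵥ x) i‖ ^ 2) / Real.sqrt (∑ j, ‖x j‖ ^ 2)}) :
    r ≤ ‖auxTE A‖ := by
  obtain ⟨x, hx, rfl⟩ := hr
  rw [div_le_iff₀ (aux_en_pos hx)]
  calc Real.sqrt (∑ i, ‖(A *ᵥ x) i‖ ^ 2)
      = ‖auxTE A ((WithLp.equiv 2 (Fin m → ℂ)).symm x)‖ := by rw [auxTE_apply, aux_en_symm]
    _ ≤ ‖auxTE A‖ * ‖(WithLp.equiv 2 (Fin m → ℂ)).symm x‖ := (auxTE A).le_opNorm _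
    _ = ‖auxTE A‖ * Real.sqrt (∑ j, ‖x j‖ ^ 2) := by rw [aux_en_symm]

lemma aux_spec_mulVec_le (A : Matrix (Fin m) (Fin m) ℂ) {c : ℝ}
    (hc : spectralNormM A ≤ c) (v : Fin m → ℂ) :
    Real.sqrt (∑ i, ‖(A *ᵥ v) i‖ ^ 2) ≤ c * Real.sqrt (∑ j, ‖v j‖ ^ 2) := by
  by_cases hv : v = 0
  · simp [hv, Matrix.mulVec_zero]
  · have hmem : Real.sqrt (∑ i, ‖(A *ᵥ v) i‖ ^ 2) / Real.sqrt (∑ j, ‖v j‖ ^ 2) ∈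
        {r : ℝ | ∃ x : Fin m → ℂ, x ≠ 0 ∧
          r = Real.sqrt (∑ i, ‖(A *ᵥ x) i‖ ^ 2) / Real.sqrt (∑ j, ‖x j‖ ^ 2)} := ⟨v, hv, rfl⟩
    have hle : Real.sqrt (∑ i, ‖(A *ᵥ v) i‖ ^ 2) / Real.sqrt (∑ j, ‖v j‖ ^ 2)
        ≤ spectralNormM A :=
      le_csSup ⟨‖auxTE A‖, fun r hr => aux_mem_specSet_le A hr⟩ hmem
    have := hle.trans hc
    rwa [div_le_iff₀ (aux_en_pos hv)] at this

lemma auxTE_opNorm_le (A : Matrix (Fin m) (Fin m) ℂ) {c : ℝ} (hc0 : 0 ≤ c)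
    (hc : spectralNormM A ≤ c) : ‖auxTE A‖ ≤ c := by
  apply ContinuousLinearMap.opNorm_le_bound _ hc0
  intro x
  have hx : x = (WithLp.equiv 2 (Fin m → ℂ)).symm ((WithLp.equiv 2 (Fin m → ℂ)) x) := rfl
  rw [hx, auxTE_apply, aux_en_symm, aux_en_symm]
  exact aux_spec_mulVec_le A hc _

noncomputable def auxTSY : (EuclideanSpace ℂ (Fin m) →L[ℂ] EuclideanSpace ℂ (Fin m))
    →ₗ[ℂ] Matrix (Fin m) (Fin m) ℂ where
  toFun L := (Matrix.toEuclideanCLM (𝕜 := ℂ)).symm L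
  map_add' x y := by simp
  map_smul' c x := by simp

lemma auxTE_mexp (B : Matrix (Fin m) (Fin m) ℂ) :
    auxTE (mexp B) = exp (auxTE B) := by
  have hcont : Continuous (auxTSY (m := m)) := auxTSY.continuous_of_finiteDimensional
  have hψ : ∀ M, (⟨auxTSY, hcont⟩ : (EuclideanSpace ℂ (Fin m) →L[ℂ] EuclideanSpace ℂ (Fin m))
      →L[ℂ] Matrix (Fin m) (Fin m) ℂ) M
      = (Matrix.toEuclideanCLM (𝕜 := ℂ)).symm M := fun _ => rfl
  have hsum : Summable fun n : ℕ => ((n.factorial : ℂ)⁻¹) • (auxTE B) ^ n :=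
    expSeries_summable' (auxTE B)
  have hE : exp (auxTE B) = ∑' n : ℕ, ((n.factorial : ℂ)⁻¹) • (auxTE B) ^ n := by
    rw [exp_eq_tsum (𝕂 := ℂ)]
  have key : mexp B = (Matrix.toEuclideanCLM (𝕜 := ℂ)).symm (exp (auxTE B)) := by
    rw [hE, ← hψ,
      (⟨auxTSY, hcont⟩ : (EuclideanSpace ℂ (Fin m) →L[ℂ] EuclideanSpace ℂ (Fin m))
        →L[ℂ] Matrix (Fin m) (Fin m) ℂ).map_tsum hsum, mexp]
    congr 1
    funext n
    rw [hψ, _root_.map_smul, map_pow, auxTE, StarAlgEquiv.symm_apply_apply]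
  rw [key, auxTE]
  exact StarAlgEquiv.apply_symm_apply _ _

lemma aux_norm_exp_sub_one_le (L : EuclideanSpace ℂ (Fin m) →L[ℂ] EuclideanSpace ℂ (Fin m)) :
    ‖exp L - 1‖ ≤ Real.exp ‖L‖ - 1 := by
  have hsum : Summable fun n : ℕ => ((n.factorial : ℂ)⁻¹) • L ^ n := expSeries_summable' L
  have hnsum : Summable fun n : ℕ => ‖((n.factorial : ℂ)⁻¹) • L ^ n‖ :=
    norm_expSeries_summable' L
  have hrsum : Summable fun n : ℕ => ‖L‖ ^ n / n.factorial :=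
    Real.summable_pow_div_factorial ‖L‖
  have hexp : exp L - 1 = ∑' n : ℕ, (((n + 1).factorial : ℂ)⁻¹) • L ^ (n + 1) := by
    rw [exp_eq_tsum (𝕂 := ℂ)]
    beta_reduce
    have := Summable.tsum_eq_zero_add (f := fun n : ℕ => ((n.factorial : ℂ)⁻¹) • L ^ n) hsum
    rw [this]
    simp only [Nat.factorial_zero, Nat.cast_one, inv_one, pow_zero, one_smul,
      add_sub_cancel_left]
  have hreal : Real.exp ‖L‖ - 1 = ∑' n : ℕ, ‖L‖ ^ (n + 1) / (n + 1).factorial := by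
    rw [Real.exp_eq_exp_ℝ, exp_eq_tsum_div]
    beta_reduce
    have := Summable.tsum_eq_zero_add (f := fun n : ℕ => ‖L‖ ^ n / n.factorial) hrsum
    rw [this]
    simp only [Nat.factorial_zero, Nat.cast_one, pow_zero, div_one, add_sub_cancel_left]
  rw [hexp, hreal]
  calc ‖∑' n : ℕ, (((n + 1).factorial : ℂ)⁻¹) • L ^ (n + 1)‖
      ≤ ∑' n : ℕ, ‖(((n + 1).factorial : ℂ)⁻¹) • L ^ (n + 1)‖ :=
        norm_tsum_le_tsum_norm (hnsum.comp_injective Nat.succ_injective)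
    _ ≤ ∑' n : ℕ, ‖L‖ ^ (n + 1) / (n + 1).factorial := by
        apply Summable.tsum_le_tsum _ (hnsum.comp_injective Nat.succ_injective)
          (hrsum.comp_injective Nat.succ_injective)
        intro n
        simp only [Function.comp_apply]
        rw [norm_smul ((n.succ.factorial : ℂ)⁻¹) (L ^ n.succ), norm_inv,
          Complex.norm_natCast, div_eq_inv_mul]
        exact mul_le_mul_of_nonneg_left (norm_pow_le' L n.succ_pos) (by positivity)

lemma auxTE_D_norm (B : Matrix (Fin m) (Fin m) ℂ) {c : ℝ} (hB : ‖auxTE B‖ ≤ c) :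
    ‖auxTE ((mexp B)ᴴ - 1)‖ ≤ Real.exp c - 1 := by
  have h1 : auxTE ((mexp B)ᴴ - 1) = star (exp (auxTE B) - 1) := by
    rw [auxTE, map_sub, _root_.map_one, ← Matrix.star_eq_conjTranspose, map_star,
      ← auxTE, auxTE_mexp]
    rw [star_sub (exp (auxTE B)) 1, star_one]
  rw [h1, ContinuousLinearMap.star_eq_adjoint]
  rw [ContinuousLinearMap.adjoint.norm_map]
  calc ‖exp (auxTE B) - 1‖ ≤ Real.exp ‖auxTE B‖ - 1 := aux_norm_exp_sub_one_le _
    _ ≤ Real.exp c - 1 := sub_le_sub_right (Real.exp_le_exp.2 hB) 1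

end auxSpec

theorem stmt_14 {N m : ℕ} (hm : 1 ≤ m)
    (P : Matrix (Fin N) (Fin N) ℝ) (π : Fin N → ℝ)
    (hP : IsMarkov P) (hreg : IsRegularMC P) (hπ : IsStationaryMC P π)
    (ℓ t : ℝ) (hℓ : 0 ≤ ℓ) (ht : 0 < t)
    (H : Fin N → Matrix (Fin m) (Fin m) ℂ)
    (hH : ∀ i, spectralNormM (H i) ≤ ℓ)
    (hmean : ∑ i, π i • H i = 0)
    (z zpar zperp : Fin N × Fin m → ℂ)
    (hdecz : z = zpar + zperp) (hzpar : memU π zpar) (hzperp : perpU π zperp)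
    (y ypar yperp : Fin N × Fin m → ℂ)
    (hy : y = ((P.map Complex.ofReal) ⊗ₖ (1 : Matrix (Fin m) (Fin m) ℂ))ᵀ *ᵥ
      ((blockDiag' fun i => mexp ((t : ℂ) • H i))ᴴ *ᵥ zperp))
    (hdecy : y = ypar + yperp) (hypar : memU π ypar) (hyperp : perpU π yperp) :
    piNormKron π ypar ≤ (Real.exp (t * ℓ) - 1) * piNormKron π zperp := by
  classical
  obtain ⟨hPnn, hProw⟩ := hP
  obtain ⟨hπpos, hπsum, -⟩ := hπ
  obtain ⟨w, hw⟩ := hypar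
  set c := Real.exp (t * ℓ) - 1 with hcdef
  have hc0 : 0 ≤ c := by
    rw [hcdef]
    linarith [Real.one_le_exp (mul_nonneg ht.le hℓ)]
  have hπne : ∀ j : Fin N, (π j : ℂ) ≠ 0 := fun j => by
    exact_mod_cast Complex.ofReal_ne_zero.2 (hπpos j).ne'
  -- zero column sums for vectors orthogonal to U
  have hperpsum : ∀ (v : Fin N × Fin m → ℂ), perpU π v → ∀ k, ∑ j, v (j, k) = 0 := by
    intro v hv k
    have h0 := hv (fun l => if l = k then (1 : ℂ) else 0)
    rw [piInnerKron, Fintype.sum_prod_type] at h0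
    calc ∑ j, v (j, k)
        = ∑ j, ∑ l, (starRingEnd ℂ) ((π j : ℂ) * if l = k then 1 else 0) * v (j, l)
            / (π j : ℂ) := by
          refine Finset.sum_congr rfl fun j _ => ?_
          rw [Finset.sum_eq_single k]
          · have h2 : ((starRingEnd ℂ) ((π (j, k).1 : ℂ) *
                if (j, k).2 = k then 1 else 0)) = (π j : ℂ) := by
              simp [Complex.conj_ofReal]
            rw [h2, mul_comm, mul_div_assoc, div_self (hπne j), mul_one]
          · intro l _ hl
            simp [hl]
          · simp
      _ = 0 := h0
  have hzsum : ∀ k, ∑ j, zperp (j, k) = 0 := hperpsum zperp hzperp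
  have hysum' : ∀ k, ∑ j, yperp (j, k) = 0 := hperpsum yperp hyperp
  -- sum of ypar columns
  have hyparsum : ∀ k, ∑ i, ypar (i, k) = w k := by
    intro k
    calc ∑ i, ypar (i, k) = ∑ i, (π i : ℂ) * w k := by
          exact Finset.sum_congr rfl fun i _ => hw (i, k)
      _ = ((∑ i, π i : ℝ) : ℂ) * w k := by rw [← Finset.sum_mul]; push_cast; ring
      _ = w k := by rw [hπsum]; simp
  have hwsum : ∀ k, ∑ i, y (i, k) = w k := by
    intro k
    rw [hdecy]
    simp only [Pi.add_apply]
    rw [Finset.sum_add_distrib, hyparsum k, hysum' k, add_zero]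
  -- the block formula
  set D : Fin N → Matrix (Fin m) (Fin m) ℂ :=
    fun j => (mexp ((t : ℂ) • H j))ᴴ - 1 with hD
  set zj : Fin N → Fin m → ℂ := fun j l => zperp (j, l) with hzj
  set u : Fin N × Fin m → ℂ :=
    (_root_.blockDiag' fun i => mexp ((t : ℂ) • H i))ᴴ *ᵥ zperp with hudef
  have hu : ∀ j k, u (j, k) = ((mexp ((t : ℂ) • H j))ᴴ *ᵥ zj j) k := by
    intro j k
    rw [hudef]
    simp only [Matrix.mulVec, dotProduct, Matrix.conjTranspose_apply, hzj]
    rw [Fintype.sum_prod_type]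
    rw [Finset.sum_eq_single j]
    · refine Finset.sum_congr rfl fun l _ => ?_
      simp [_root_.blockDiag']
    · intro j' _ hj'
      apply Finset.sum_eq_zero
      intro l _
      simp [_root_.blockDiag', hj']
    · simp
  have hyik : ∀ i k, y (i, k) = ∑ j, (P j i : ℂ) * u (j, k) := by
    intro i k
    have hy' : y = ((P.map Complex.ofReal) ⊗ₖ (1 : Matrix (Fin m) (Fin m) ℂ))ᵀ *ᵥ u := hy
    rw [hy']
    simp only [Matrix.mulVec, dotProduct, Matrix.transpose_apply,
      Matrix.kroneckerMap_apply, Matrix.map_apply, Matrix.one_apply]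
    rw [Fintype.sum_prod_type]
    refine Finset.sum_congr rfl fun j _ => ?_
    simp only [mul_ite, mul_one, mul_zero, ite_mul, zero_mul]
    simp [Finset.sum_ite_eq, Finset.sum_ite_eq', mul_assoc]
  have hwk : ∀ k, w k = ∑ j, (D j *ᵥ zj j) k := by
    intro k
    rw [← hwsum k]
    calc ∑ i, y (i, k)
        = ∑ i, ∑ j, (P j i : ℂ) * u (j, k) :=
          Finset.sum_congr rfl fun i _ => hyik i k
      _ = ∑ j, (∑ i, (P j i : ℂ)) * u (j, k) := by
          rw [Finset.sum_comm]
          exact Finset.sum_congr rfl fun j _ => (Finset.sum_mul _ _ _).symm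
      _ = ∑ j, u (j, k) := by
          refine Finset.sum_congr rfl fun j _ => ?_
          have : (∑ i, (P j i : ℂ)) = 1 := by
            rw [← Complex.ofReal_sum, hProw j, Complex.ofReal_one]
          rw [this, one_mul]
      _ = ∑ j, ((mexp ((t : ℂ) • H j))ᴴ *ᵥ zj j) k :=
          Finset.sum_congr rfl fun j _ => hu j k
      _ = ∑ j, ((D j *ᵥ zj j) k + zj j k) := by
          refine Finset.sum_congr rfl fun j _ => ?_
          rw [hD]
          simp only [Matrix.sub_mulVec, Matrix.one_mulVec, Pi.sub_apply]
          ring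
      _ = ∑ j, (D j *ᵥ zj j) k := by
          rw [Finset.sum_add_distrib]
          have : ∑ j, zj j k = 0 := hzsum k
          rw [this, add_zero]
  -- norm of ypar
  have hnypar : piNormKron π ypar = Real.sqrt (∑ k, ‖w k‖ ^ 2) := by
    rw [piNormKron]
    congr 1
    rw [Fintype.sum_prod_type]
    calc ∑ j, ∑ k, ‖ypar (j, k)‖ ^ 2 / π j
        = ∑ j, π j * ∑ k, ‖w k‖ ^ 2 := by
          refine Finset.sum_congr rfl fun j _ => ?_
          rw [Finset.mul_sum]
          refine Finset.sum_congr rfl fun k _ => ?_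
          rw [hw (j, k), norm_mul, Complex.norm_real, Real.norm_eq_abs,
            abs_of_pos (hπpos j), mul_pow]
          field_simp [(hπpos j).ne']
      _ = (∑ j, π j) * ∑ k, ‖w k‖ ^ 2 := (Finset.sum_mul _ _ _).symm
      _ = ∑ k, ‖w k‖ ^ 2 := by rw [hπsum, one_mul]
  -- operator norm bound on D j
  have hDnorm : ∀ j, ‖auxTE (D j)‖ ≤ c := by
    intro j
    rw [hD, hcdef]
    apply auxTE_D_norm
    have h1 : auxTE ((t : ℂ) • H j) = (t : ℂ) • auxTE (H j) := by
      rw [auxTE, _root_.map_smul]; rfl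
    rw [h1, norm_smul ((t : ℂ)) (auxTE (H j)), Complex.norm_real, Real.norm_eq_abs,
      abs_of_pos ht]
    exact mul_le_mul_of_nonneg_left (auxTE_opNorm_le (H j) hℓ (hH j)) ht.le
  -- the triangle-inequality estimate
  have hkey : Real.sqrt (∑ k, ‖w k‖ ^ 2)
      ≤ c * ∑ j, Real.sqrt (∑ k, ‖zj j k‖ ^ 2) := by
    have hwfun : w = ∑ j, (fun k => (D j *ᵥ zj j) k) := by
      funext k
      rw [hwk k]
      simp [Finset.sum_apply]
    have hWsum : (WithLp.equiv 2 (Fin m → ℂ)).symm w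
        = ∑ j, (WithLp.equiv 2 (Fin m → ℂ)).symm (D j *ᵥ zj j) := by
      rw [hwfun]; exact map_sum (WithLp.linearEquiv 2 ℂ (Fin m → ℂ)).symm _ _
    calc Real.sqrt (∑ k, ‖w k‖ ^ 2)
        = ‖(WithLp.equiv 2 (Fin m → ℂ)).symm w‖ := (aux_en_symm w).symm
      _ = ‖∑ j, (WithLp.equiv 2 (Fin m → ℂ)).symm (D j *ᵥ zj j)‖ := by rw [hWsum]
      _ ≤ ∑ j, ‖(WithLp.equiv 2 (Fin m → ℂ)).symm (D j *ᵥ zj j)‖ :=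
          norm_sum_le _ _
      _ ≤ ∑ j, c * Real.sqrt (∑ k, ‖zj j k‖ ^ 2) := by
          refine Finset.sum_le_sum fun j _ => ?_
          calc ‖(WithLp.equiv 2 (Fin m → ℂ)).symm (D j *ᵥ zj j)‖
              = ‖auxTE (D j) ((WithLp.equiv 2 (Fin m → ℂ)).symm (zj j))‖ := by
                rw [auxTE_apply]
            _ ≤ ‖auxTE (D j)‖ * ‖(WithLp.equiv 2 (Fin m → ℂ)).symm (zj j)‖ :=
                (auxTE (D j)).le_opNorm _
            _ ≤ c * Real.sqrt (∑ k, ‖zj j k‖ ^ 2) := by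
                rw [aux_en_symm]
                exact mul_le_mul_of_nonneg_right (hDnorm j) (Real.sqrt_nonneg _)
      _ = c * ∑ j, Real.sqrt (∑ k, ‖zj j k‖ ^ 2) := (Finset.mul_sum _ _ _).symm
  -- Cauchy-Schwarz estimate
  have hCS : ∑ j, Real.sqrt (∑ k, ‖zj j k‖ ^ 2) ≤ piNormKron π zperp := by
    have h1 : piNormKron π zperp
        = Real.sqrt (∑ j, (∑ k, ‖zj j k‖ ^ 2) / π j) := by
      rw [piNormKron, Fintype.sum_prod_type]
      congr 1
      refine Finset.sum_congr rfl fun j _ => ?_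
      rw [Finset.sum_div]
    calc ∑ j, Real.sqrt (∑ k, ‖zj j k‖ ^ 2)
        = ∑ j, Real.sqrt (π j) * Real.sqrt ((∑ k, ‖zj j k‖ ^ 2) / π j) := by
          refine Finset.sum_congr rfl fun j _ => ?_
          rw [← Real.sqrt_mul (hπpos j).le, ← mul_div_assoc,
            mul_div_cancel_left₀ _ (hπpos j).ne']
      _ ≤ Real.sqrt (∑ j, π j) * Real.sqrt (∑ j, (∑ k, ‖zj j k‖ ^ 2) / π j) :=
          Real.sum_sqrt_mul_sqrt_le Finset.univ (fun j => (hπpos j).le)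
            (fun j => div_nonneg (Finset.sum_nonneg fun k _ => by positivity) (hπpos j).le)
      _ = piNormKron π zperp := by rw [hπsum, Real.sqrt_one, one_mul, h1]
  rw [hnypar]
  exact le_trans hkey (mul_le_mul_of_nonneg_left hCS hc0)
end
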